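/- arXiv:cs/0702162 — 6 statements merged into one kernel-verified Lean document; each statement's English description precedes it below -/
import Mathlib

section
/- If A is a Z-matrix (all off-diagonal entries nonpositive) that is also a P-matrix (all principal minors positive), then A is invertible and its inverse has all entries nonnegative. -/
/-- A real square matrix is a Z-matrix if all its off-diagonal entries are nonpositive. -/
def IsZMatrix {n : ℕ} (A : Matrix (Fin n) (Fin n) ℝ) : Prop :=
  ∀ i j, i ≠ j → A i j ≤ 0

/-- A real square matrix is a P-matrix if all its principal minors are positive. -/
def IsPMatrix {n : ℕ} (A : Matrix (Fin n) (Fin n) ℝ) : Prop :=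
  ∀ S : Finset (Fin n),
    0 < (A.submatrix (fun i : {x // x ∈ S} => (i : Fin n))
          (fun i : {x // x ∈ S} => (i : Fin n))).det

open Matrix Finset

def PProp {ι : Type} [Fintype ι] [DecidableEq ι] (A : Matrix ι ι ℝ) : Prop :=
  ∀ S : Finset ι,
    0 < (A.submatrix (fun i : {x // x ∈ S} => (i : ι)) (fun i : {x // x ∈ S} => (i : ι))).det

lemma PProp.det_pos {ι : Type} [Fintype ι] [DecidableEq ι] {A : Matrix ι ι ℝ}
    (h : PProp A) : 0 < A.det := by
  have := h Finset.univ
  rwa [show (fun i : {x // x ∈ (Finset.univ : Finset ι)} => (i : ι)) =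
      ⇑(Equiv.subtypeUnivEquiv (fun x => Finset.mem_univ x)) from rfl,
    Matrix.det_submatrix_equiv_self] at this

lemma PProp.submatrix_inj {ι κ : Type} [Fintype ι] [DecidableEq ι] [Fintype κ] [DecidableEq κ]
    {A : Matrix ι ι ℝ} (h : PProp A) (f : κ → ι) (hf : Function.Injective f) :
    PProp (A.submatrix f f) := by
  intro T
  set S : Finset ι := T.map ⟨f, hf⟩ with hS
  have hmem : ∀ y : {x // x ∈ T}, f y.1 ∈ S := fun y => Finset.mem_map.mpr ⟨y.1, y.2, rfl⟩
  let e : {x // x ∈ T} ≃ {x // x ∈ S} :=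
    { toFun := fun y => ⟨f y.1, hmem y⟩
      invFun := fun x => ⟨Classical.choose (Finset.mem_map.mp x.2),
          (Classical.choose_spec (Finset.mem_map.mp x.2)).1⟩
      left_inv := by
        intro y
        apply Subtype.ext
        exact hf (Classical.choose_spec (Finset.mem_map.mp (hmem y))).2
      right_inv := by
        intro x
        apply Subtype.ext
        exact (Classical.choose_spec (Finset.mem_map.mp x.2)).2 }
  have key : ((A.submatrix f f).submatrix (fun i : {x // x ∈ T} => (i : κ))
        (fun i : {x // x ∈ T} => (i : κ)))
      = (A.submatrix (fun i : {x // x ∈ S} => (i : ι)) (fun i : {x // x ∈ S} => (i : ι))).submatrix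
        e e := by
    ext x y
    rfl
  rw [key, Matrix.det_submatrix_equiv_self]
  exact h S


lemma det_updateColumn_single1 {ι : Type} [Fintype ι] [DecidableEq ι]
    (M : Matrix ι ι ℝ) (a : ι) :
    (M.updateCol a (Pi.single a 1)).det
      = (M.submatrix (fun i : {x : ι // x ≠ a} => (i : ι)) (fun i : {x : ι // x ≠ a} => (i : ι))).det := by
  classical
  set M' := M.updateCol a (Pi.single a 1) with hM'
  let e : {x : ι // x = a} ⊕ {x : ι // ¬ x = a} ≃ ι := Equiv.sumCompl (· = a)
  have he1 : ∀ y : {x : ι // x = a}, e (Sum.inl y) = (y : ι) := fun _ => rfl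
  have he2 : ∀ y : {x : ι // ¬ x = a}, e (Sum.inr y) = (y : ι) := fun _ => rfl
  have hdet : M'.det = (M'.submatrix e e).det := (Matrix.det_submatrix_equiv_self e M').symm
  have hblocks : M'.submatrix e e =
      Matrix.fromBlocks (Matrix.of fun _ _ => 1) (Matrix.of fun x y => M x.1 y.1) 0
        (Matrix.of fun (x : {x : ι // ¬ x = a}) (y : {x : ι // ¬ x = a}) => M x.1 y.1) := by
    ext x y
    cases x with
    | inl x =>
      cases y with
      | inl y =>
        simp only [Matrix.submatrix_apply, he1, Matrix.fromBlocks_apply₁₁, Matrix.of_apply]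
        rw [hM', Matrix.updateCol_apply, if_pos y.2, x.2]
        simp
      | inr y =>
        simp only [Matrix.submatrix_apply, he1, he2, Matrix.fromBlocks_apply₁₂, Matrix.of_apply]
        rw [hM', Matrix.updateCol_apply, if_neg y.2]
    | inr x =>
      cases y with
      | inl y =>
        simp only [Matrix.submatrix_apply, he1, he2, Matrix.fromBlocks_apply₂₁]
        rw [hM', Matrix.updateCol_apply, if_pos y.2]
        have : (x : ι) ≠ a := x.2
        simp [Pi.single_eq_of_ne this]
      | inr y =>
        simp only [Matrix.submatrix_apply, he2, Matrix.fromBlocks_apply₂₂, Matrix.of_apply]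
        rw [hM', Matrix.updateCol_apply, if_neg y.2]
  haveI hsub : Subsingleton {x : ι // x = a} := ⟨fun b c => Subtype.ext (b.2.trans c.2.symm)⟩
  rw [hdet, hblocks, Matrix.det_fromBlocks_zero₂₁]
  have h1 : (Matrix.det (Matrix.of fun (_ _ : {x : ι // x = a}) => (1:ℝ))) = 1 := by
    rw [Matrix.det_eq_elem_of_subsingleton _ ⟨a, rfl⟩]
    rfl
  rw [h1, one_mul]
  rfl

lemma det_add_diagonal_pos : ∀ (m : ℕ) (ι : Type) [Fintype ι] [DecidableEq ι],
    Fintype.card ι = m → ∀ (A : Matrix ι ι ℝ), PProp A →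
    ∀ d : ι → ℝ, (∀ i, 0 ≤ d i) → 0 < (A + Matrix.diagonal d).det := by
  intro m
  induction m using Nat.strong_induction_on with
  | _ m IH =>
    intro ι _ _ hcard A hA d hd
    -- inner induction on the support finset
    have claim : ∀ s : Finset ι, ∀ d : ι → ℝ, (∀ i, 0 ≤ d i) → (∀ i ∉ s, d i = 0) →
        0 < (A + Matrix.diagonal d).det := by
      intro s
      induction s using Finset.induction_on with
      | empty =>
        intro d hd h0
        have : d = 0 := funext fun i => h0 i (Finset.notMem_empty i)
        have h00 : A + Matrix.diagonal (0 : ι → ℝ) = A := by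
          ext i j
          by_cases h : i = j
          · simp [h]
          · simp [Matrix.diagonal_apply_ne _ h]
        rw [this, h00]
        exact hA.det_pos
      | insert a s ha ihs =>
        intro d hd h0
        set d' := Function.update d a 0 with hd'
        have hd'0 : ∀ i, 0 ≤ d' i := by
          intro i
          by_cases h : i = a
          · simp [hd', h]
          · simp [hd', Function.update_of_ne h]; exact hd i
        have hd's : ∀ i ∉ s, d' i = 0 := by
          intro i hi
          by_cases h : i = a
          · simp [hd', h]
          · rw [hd', Function.update_of_ne h]
            exact h0 i (by simp [h, hi])
        set M := A + Matrix.diagonal d' with hM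
        have hMdet : 0 < M.det := ihs d' hd'0 hd's
        have hcol : A + Matrix.diagonal d
            = M.updateCol a ((fun i => M i a) + d a • (Pi.single a 1 : ι → ℝ)) := by
          ext i j
          rw [Matrix.updateCol_apply]
          by_cases hj : j = a
          · rw [if_pos hj, hj]
            show A i a + Matrix.diagonal d i a = M i a + d a * (Pi.single a 1 : ι → ℝ) i
            by_cases hi : i = a
            · rw [hi]
              simp [hM, hd']
            · simp [hM, hd', Matrix.diagonal_apply_ne _ hi, Pi.single_eq_of_ne hi]
          · rw [if_neg hj]
            by_cases hi : i = j
            · rw [hi]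
              simp [hM, hd', Function.update_of_ne hj]
            · simp [hM, Matrix.diagonal_apply_ne _ hi]
        rw [hcol, Matrix.det_updateCol_add, Matrix.updateCol_eq_self,
          Matrix.det_updateCol_smul, det_updateColumn_single1]
        have hsubdet : 0 < ((M.submatrix (fun i : {x : ι // x ≠ a} => (i : ι))
            (fun i : {x : ι // x ≠ a} => (i : ι))).det) := by
          have hinj : Function.Injective (fun i : {x : ι // x ≠ a} => (i : ι)) :=
            Subtype.val_injective
          have hsplit : M.submatrix (fun i : {x : ι // x ≠ a} => (i : ι))
              (fun i : {x : ι // x ≠ a} => (i : ι))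
              = (A.submatrix (fun i : {x : ι // x ≠ a} => (i : ι))
                  (fun i : {x : ι // x ≠ a} => (i : ι)))
                + Matrix.diagonal (fun i : {x : ι // x ≠ a} => d' i.1) := by
            ext x y
            by_cases h : x = y
            · subst h
              simp [hM, Matrix.diagonal_apply_eq]
            · have : (x : ι) ≠ (y : ι) := fun hc => h (Subtype.ext hc)
              simp [hM, Matrix.diagonal_apply_ne _ this, Matrix.diagonal_apply_ne _ h]
          have hcard' : Fintype.card {x : ι // x ≠ a} = m - 1 := by
            rw [← hcard]
            simp [Fintype.card_subtype_compl]
          have hmpos : 0 < m := by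
            rw [← hcard]
            exact Fintype.card_pos_iff.mpr ⟨a⟩
          rw [hsplit]
          exact IH (m-1) (Nat.sub_lt hmpos one_pos) {x : ι // x ≠ a} hcard'
            _ (hA.submatrix_inj _ hinj) _ (fun i => hd'0 i.1)
        have : 0 ≤ d a * (M.submatrix (fun i : {x : ι // x ≠ a} => (i : ι))
            (fun i : {x : ι // x ≠ a} => (i : ι))).det := mul_nonneg (hd a) hsubdet.le
        linarith
    exact claim Finset.univ d hd (fun i hi => absurd (Finset.mem_univ i) hi)


lemma mulVec_nonneg_of_ZP {n : ℕ} (A : Matrix (Fin n) (Fin n) ℝ)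
    (hZ : IsZMatrix A) (hP : PProp A) (x : Fin n → ℝ)
    (hx : ∀ i, 0 ≤ A.mulVec x i) : ∀ i, 0 ≤ x i := by
  by_contra hcon
  push_neg at hcon
  obtain ⟨i0, hi0⟩ := hcon
  set S : Finset (Fin n) := Finset.univ.filter (fun i => x i < 0) with hS
  have hi0S : i0 ∈ S := by simp [hS, hi0]
  set A' := A.submatrix (fun i : {y // y ∈ S} => (i : Fin n)) (fun i : {y // y ∈ S} => (i : Fin n))
    with hA'
  set x' : {y // y ∈ S} → ℝ := fun k => x k.1 with hx'
  have hxneg : ∀ k : {y // y ∈ S}, x' k < 0 := by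
    intro k
    exact (Finset.mem_filter.mp k.2).2
  have hPA' : PProp A' := hP.submatrix_inj _ Subtype.val_injective
  have hmv : ∀ k : {y // y ∈ S}, 0 ≤ A'.mulVec x' k := by
    intro k
    have hsplit : A.mulVec x k.1
        = (∑ j ∈ S, A k.1 j * x j) + ∑ j ∈ Finset.univ.filter (fun j => ¬ x j < 0), A k.1 j * x j := by
      rw [Matrix.mulVec, dotProduct]
      exact (Finset.sum_filter_add_sum_filter_not Finset.univ (fun j => x j < 0)
        (fun j => A k.1 j * x j)).symm
    have hsum : A'.mulVec x' k = ∑ j ∈ S, A k.1 j * x j := by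
      rw [Matrix.mulVec, dotProduct]
      exact Finset.sum_coe_sort S (fun j => A k.1 j * x j)
    have hneg : ∑ j ∈ Finset.univ.filter (fun j => ¬ x j < 0), A k.1 j * x j ≤ 0 := by
      apply Finset.sum_nonpos
      intro j hj
      simp only [Finset.mem_filter, Finset.mem_univ, true_and, not_lt] at hj
      have hne : k.1 ≠ j := by
        intro hkj
        have hxx := (Finset.mem_filter.mp k.2).2
        rw [hkj] at hxx
        exact absurd hxx (not_lt.mpr hj)
      exact mul_nonpos_of_nonpos_of_nonneg (hZ k.1 j hne) hj
    have := hx k.1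
    rw [hsplit] at this
    rw [hsum]
    linarith
  set d : {y // y ∈ S} → ℝ := fun k => (A'.mulVec x' k) / (-(x' k)) with hd
  have hdnn : ∀ k, 0 ≤ d k := fun k =>
    div_nonneg (hmv k) (by linarith [hxneg k])
  have hker : (A' + Matrix.diagonal d).mulVec x' = 0 := by
    funext k
    rw [Matrix.add_mulVec]
    simp only [Pi.add_apply, Matrix.mulVec_diagonal, Pi.zero_apply]
    have hxk : x' k ≠ 0 := ne_of_lt (hxneg k)
    have h2 : d k * x' k = -(A'.mulVec x' k) := by
      rw [hd]
      rw [div_mul_eq_mul_div, div_eq_iff (neg_ne_zero.mpr hxk)]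
      ring
    rw [h2]
    ring
  have hx'ne : x' ≠ 0 := by
    intro h
    have := congrFun h ⟨i0, hi0S⟩
    simp [hx'] at this
    rw [this] at hi0
    exact lt_irrefl 0 hi0
  have hdet0 : (A' + Matrix.diagonal d).det = 0 :=
    Matrix.exists_mulVec_eq_zero_iff.mp ⟨x', hx'ne, hker⟩
  have hdetpos := det_add_diagonal_pos (Fintype.card {y // y ∈ S}) {y // y ∈ S} rfl A' hPA' d hdnn
  rw [hdet0] at hdetpos
  exact lt_irrefl 0 hdetpos

theorem z_and_p_matrix_inverse_nonneg {n : ℕ} (A : Matrix (Fin n) (Fin n) ℝ)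
    (hZ : IsZMatrix A) (hP : IsPMatrix A) :
    IsUnit A ∧ ∀ i j, 0 ≤ A⁻¹ i j := by
  have hPP : PProp A := hP
  have hdet : 0 < A.det := hPP.det_pos
  have hdu : IsUnit A.det := Ne.isUnit hdet.ne'
  refine ⟨(Matrix.isUnit_iff_isUnit_det A).mpr hdu, ?_⟩
  intro i j
  set x : Fin n → ℝ := fun i => A⁻¹ i j with hxdef
  have hx : ∀ i, 0 ≤ A.mulVec x i := by
    intro i
    have : A.mulVec x i = (A * A⁻¹) i j := by
      rw [Matrix.mul_apply, Matrix.mulVec, dotProduct]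
    rw [this, Matrix.mul_nonsing_inv A hdu, Matrix.one_apply]
    by_cases h : i = j <;> simp [h]
  exact mulVec_nonneg_of_ZP A hZ hPP x hx i
end

section
/- If A is a Z-matrix that is also a P-matrix, then there exists a vector s with all entries positive such that the vector sᵀA has all entries positive. -/
open scoped Matrix


section Aux

variable {ι : Type*} [Fintype ι] [DecidableEq ι]

/-- All principal minors positive, over a general index type. -/
def PMinors (A : Matrix ι ι ℝ) : Prop :=
  ∀ S : Finset ι,
    0 < (A.submatrix (fun i : {x // x ∈ S} => (i : ι))
          (fun i : {x // x ∈ S} => (i : ι))).det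

/-- The determinant of the matrix whose rows on `s` come from `A`, and whose rows off `s`
are identity rows, is the principal minor of `A` on `s`. -/
lemma det_piecewise_one (A : Matrix ι ι ℝ) (s : Finset ι) :
    (Matrix.of (s.piecewise (fun i => A i) (fun i => (1 : Matrix ι ι ℝ) i))).det
      = (A.submatrix (fun i : {x // x ∈ s} => (i : ι))
          (fun i : {x // x ∈ s} => (i : ι))).det := by
  classical
  set M : Matrix ι ι ℝ := Matrix.of (s.piecewise (fun i => A i) (fun i => (1 : Matrix ι ι ℝ) i))
  let e : {x // x ∈ s} ⊕ {x // x ∉ s} ≃ ι := Equiv.sumCompl (fun x => x ∈ s)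
  have h1 : M.submatrix e e =
      Matrix.fromBlocks
        (A.submatrix (fun i : {x // x ∈ s} => (i : ι)) (fun i : {x // x ∈ s} => (i : ι)))
        (A.submatrix (fun i : {x // x ∈ s} => (i : ι)) (fun i : {x // x ∉ s} => (i : ι)))
        0 1 := by
    ext i j
    cases i with
    | inl i =>
      cases j with
      | inl j =>
        simp [M, e, Matrix.submatrix_apply, Finset.piecewise_eq_of_mem _ _ _ i.2]
      | inr j =>
        simp [M, e, Matrix.submatrix_apply, Finset.piecewise_eq_of_mem _ _ _ i.2]
    | inr i =>
      cases j with
      | inl j =>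
        have hne : (i : ι) ≠ (j : ι) := by
          intro h
          exact i.2 (h ▸ j.2)
        simp [M, e, Matrix.submatrix_apply, Finset.piecewise_eq_of_notMem _ _ _ i.2,
          Matrix.one_apply, hne]
      | inr j =>
        simp [M, e, Matrix.submatrix_apply, Finset.piecewise_eq_of_notMem _ _ _ i.2,
          Matrix.one_apply, Subtype.ext_iff]
  calc M.det = (M.submatrix e e).det := (Matrix.det_submatrix_equiv_self e M).symm
    _ = _ := by rw [h1, Matrix.det_fromBlocks_zero₂₁, Matrix.det_one, mul_one]

/-- A P-matrix plus a nonnegative diagonal matrix has positive determinant. -/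
lemma det_add_diagonal_pos_s1 {A : Matrix ι ι ℝ} (hP : PMinors A) {d : ι → ℝ}
    (hd : ∀ i, 0 ≤ d i) : 0 < (A + Matrix.diagonal d).det := by
  classical
  have expand : (A + Matrix.diagonal d).det
      = ∑ s : Finset ι, Matrix.detRowAlternating
          (s.piecewise (fun i => A i) (fun i => Matrix.diagonal d i)) :=
    Matrix.detRowAlternating.toMultilinearMap.map_add_univ
      (fun i => A i) (fun i => Matrix.diagonal d i)
  have hterm : ∀ s : Finset ι,
      Matrix.detRowAlternating (s.piecewise (fun i => A i) (fun i => Matrix.diagonal d i))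
        = (∏ i ∈ sᶜ, d i) *
          (A.submatrix (fun i : {x // x ∈ s} => (i : ι))
            (fun i : {x // x ∈ s} => (i : ι))).det := by
    intro s
    set m : ι → ι → ℝ := s.piecewise (fun i => A i) (fun i => (1 : Matrix ι ι ℝ) i) with hm
    have harg : s.piecewise (fun i => A i) (fun i => Matrix.diagonal d i)
        = sᶜ.piecewise (fun i => d i • m i) m := by
      funext i
      by_cases h : i ∈ s
      · rw [Finset.piecewise_eq_of_mem _ _ _ h,
          Finset.piecewise_eq_of_notMem _ _ _ (by simpa using h), hm,
          Finset.piecewise_eq_of_mem _ _ _ h]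
      · rw [Finset.piecewise_eq_of_notMem _ _ _ h,
          Finset.piecewise_eq_of_mem _ _ _ (by simpa using h), hm,
          Finset.piecewise_eq_of_notMem _ _ _ h]
        funext j
        by_cases hij : i = j <;>
          simp [Matrix.diagonal, Matrix.one_apply, hij]
    have h2 : Matrix.detRowAlternating (sᶜ.piecewise (fun i => d i • m i) m)
        = (∏ i ∈ sᶜ, d i) • Matrix.detRowAlternating m :=
      Matrix.detRowAlternating.toMultilinearMap.map_piecewise_smul (fun i => d i) m sᶜ
    have h3 : Matrix.detRowAlternating m = (Matrix.of m).det := rfl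
    rw [harg, h2, smul_eq_mul, h3, hm, det_piecewise_one]
  rw [expand]
  apply Finset.sum_pos'
  · intro s _
    rw [hterm s]
    exact mul_nonneg (Finset.prod_nonneg fun i _ => hd i) (hP s).le
  · refine ⟨Finset.univ, Finset.mem_univ _, ?_⟩
    rw [hterm Finset.univ]
    simpa using hP Finset.univ

/-- A P-matrix cannot map a positive vector to a nonpositive vector. -/
lemma pminors_no_reversal [Nonempty ι] {A : Matrix ι ι ℝ} (hP : PMinors A) {w : ι → ℝ}
    (hw : ∀ i, 0 < w i) (hAw : ∀ i, A.mulVec w i ≤ 0) : False := by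
  classical
  set d : ι → ℝ := fun i => -(A.mulVec w i) / w i with hd
  have hd0 : ∀ i, 0 ≤ d i := fun i => div_nonneg (neg_nonneg.2 (hAw i)) (hw i).le
  have hker : (A + Matrix.diagonal d).mulVec w = 0 := by
    funext i
    have hwi : w i ≠ 0 := (hw i).ne'
    have : d i * w i = -(A.mulVec w i) := by
      rw [hd]; field_simp
    simp only [Matrix.add_mulVec, Pi.add_apply, Matrix.mulVec_diagonal, this, Pi.zero_apply]
    ring
  have hne : w ≠ 0 := fun h => (hw (Classical.arbitrary ι)).ne' (congrFun h _)
  have h0 : (A + Matrix.diagonal d).det = 0 :=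
    Matrix.exists_mulVec_eq_zero_iff.1 ⟨w, hne, hker⟩
  exact absurd h0 (det_add_diagonal_pos_s1 hP hd0).ne'

/-- Principal submatrices of P-matrices are P-matrices. -/
lemma pminors_submatrix {A : Matrix ι ι ℝ} (hP : PMinors A) (S : Finset ι) :
    PMinors (A.submatrix (fun i : {x // x ∈ S} => (i : ι))
      (fun i : {x // x ∈ S} => (i : ι))) := by
  classical
  intro T
  set U : Finset ι := T.map (Function.Embedding.subtype _) with hU
  have hbij : Function.Bijective
      (fun y : {y // y ∈ T} => (⟨((y : {x // x ∈ S}) : ι),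
        Finset.mem_map_of_mem _ y.2⟩ : {x // x ∈ U})) := by
    constructor
    · intro a b hab
      simp only [Subtype.mk.injEq] at hab
      exact Subtype.ext (Subtype.ext (by have := congrArg Subtype.val hab; exact this))
    · rintro ⟨x, hx⟩
      rw [hU, Finset.mem_map] at hx
      obtain ⟨y, hyT, hyx⟩ := hx
      exact ⟨⟨y, hyT⟩, Subtype.ext hyx⟩
  let e : {y // y ∈ T} ≃ {x // x ∈ U} := Equiv.ofBijective _ hbij
  have key : ((A.submatrix (fun i : {x // x ∈ S} => (i : ι))
        (fun i : {x // x ∈ S} => (i : ι))).submatrix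
        (fun i : {y // y ∈ T} => (i : {x // x ∈ S}))
        (fun i : {y // y ∈ T} => (i : {x // x ∈ S})))
      = (A.submatrix (fun i : {x // x ∈ U} => (i : ι))
          (fun i : {x // x ∈ U} => (i : ι))).submatrix e e := rfl
  rw [key, Matrix.det_submatrix_equiv_self]
  exact hP U

/-- Inverse monotonicity: for a Z-matrix with positive principal minors,
`A x ≥ 0` implies `x ≥ 0`. -/
lemma zp_mulVec_nonneg {A : Matrix ι ι ℝ} (hZ : ∀ i j, i ≠ j → A i j ≤ 0) (hP : PMinors A)
    {x : ι → ℝ} (hx : ∀ i, 0 ≤ A.mulVec x i) : ∀ i, 0 ≤ x i := by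
  classical
  by_contra h
  push_neg at h
  obtain ⟨i0, hi0⟩ := h
  have hi0S : i0 ∈ Finset.univ.filter (fun i => x i < 0) := by simp [hi0]
  haveI : Nonempty {y // y ∈ Finset.univ.filter (fun i => x i < 0)} := ⟨⟨i0, hi0S⟩⟩
  refine pminors_no_reversal
    (pminors_submatrix hP (Finset.univ.filter (fun i => x i < 0)))
    (w := fun j => -x (j : ι)) ?_ ?_
  · intro j
    have hj : x (j : ι) < 0 := (Finset.mem_filter.1 j.2).2
    show (0 : ℝ) < -x (j : ι)
    linarith
  · intro i
    have hiS : x (i : ι) < 0 := (Finset.mem_filter.1 i.2).2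
    have hsum : (A.submatrix
          (fun i : {y // y ∈ Finset.univ.filter (fun i => x i < 0)} => (i : ι))
          (fun i : {y // y ∈ Finset.univ.filter (fun i => x i < 0)} => (i : ι))).mulVec
          (fun j => -x (j : ι)) i
        = -∑ j ∈ Finset.univ.filter (fun i => x i < 0), A (i : ι) j * x j := by
      have h1 : (A.submatrix
          (fun i : {y // y ∈ Finset.univ.filter (fun i => x i < 0)} => (i : ι))
          (fun i : {y // y ∈ Finset.univ.filter (fun i => x i < 0)} => (i : ι))).mulVec
          (fun j => -x (j : ι)) i
          = ∑ j : {y // y ∈ Finset.univ.filter (fun i => x i < 0)},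
              -(A (i : ι) (j : ι) * x (j : ι)) := by
        simp [Matrix.mulVec, dotProduct, mul_neg]
      rw [h1, Finset.sum_coe_sort _ (fun j => -(A (i : ι) j * x j)),
        Finset.sum_neg_distrib]
    have hrest : ∑ j ∈ Finset.univ.filter (fun j => ¬ x j < 0), A (i : ι) j * x j ≤ 0 := by
      apply Finset.sum_nonpos
      intro j hj
      have hxj : 0 ≤ x j := not_lt.1 (Finset.mem_filter.1 hj).2
      have hne : (i : ι) ≠ j := by
        intro h
        exact (Finset.mem_filter.1 hj).2 (h ▸ hiS)
      exact mul_nonpos_iff.2 (Or.inr ⟨hZ _ _ hne, hxj⟩)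
    have hsplit : ∑ j ∈ Finset.univ.filter (fun i => x i < 0), A (i : ι) j * x j
          + ∑ j ∈ Finset.univ.filter (fun j => ¬ x j < 0), A (i : ι) j * x j
        = ∑ j, A (i : ι) j * x j :=
      Finset.sum_filter_add_sum_filter_not Finset.univ _ _
    have h0 : 0 ≤ ∑ j, A (i : ι) j * x j := hx (i : ι)
    rw [hsum]
    linarith

end Aux

theorem z_and_p_matrix_exists_positive_row_vector {n : ℕ} (A : Matrix (Fin n) (Fin n) ℝ)
    (hZ : IsZMatrix A) (hP : IsPMatrix A) :
    ∃ s : Fin n → ℝ, (∀ i, 0 < s i) ∧ ∀ j, 0 < Matrix.vecMul s A j := by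
  classical
  set B := Aᵀ with hB
  have hZB : ∀ i j, i ≠ j → B i j ≤ 0 := fun i j h => hZ j i (Ne.symm h)
  have hPB : PMinors B := by
    intro S
    have : (B.submatrix (fun i : {x // x ∈ S} => (i : Fin n))
          (fun i : {x // x ∈ S} => (i : Fin n)))
        = (A.submatrix (fun i : {x // x ∈ S} => (i : Fin n))
          (fun i : {x // x ∈ S} => (i : Fin n)))ᵀ := rfl
    rw [this, Matrix.det_transpose]
    exact hP S
  have hdetA : 0 < A.det := by
    have h := hP Finset.univ
    let e : {x // x ∈ (Finset.univ : Finset (Fin n))} ≃ Fin n :=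
      Equiv.subtypeUnivEquiv (fun x => Finset.mem_univ x)
    have h2 : (A.submatrix (fun i : {x // x ∈ (Finset.univ : Finset (Fin n))} => (i : Fin n))
          (fun i : {x // x ∈ (Finset.univ : Finset (Fin n))} => (i : Fin n)))
        = A.submatrix e e := rfl
    rwa [h2, Matrix.det_submatrix_equiv_self] at h
  have hdetB : B.det ≠ 0 := by
    rw [hB, Matrix.det_transpose]
    exact hdetA.ne'
  set x : Fin n → ℝ := B⁻¹.mulVec 1 with hx
  have hBx : B.mulVec x = 1 := by
    rw [hx, Matrix.mulVec_mulVec, Matrix.mul_nonsing_inv B (isUnit_iff_ne_zero.2 hdetB),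
      Matrix.one_mulVec]
  have hx0 : ∀ i, 0 ≤ x i := by
    apply zp_mulVec_nonneg hZB hPB
    intro i
    rw [hBx]
    norm_num
  have hxpos : ∀ i, 0 < x i := by
    intro i
    rcases (hx0 i).lt_or_eq with h | h
    · exact h
    · exfalso
      have h1 : B.mulVec x i = 1 := by rw [hBx]; rfl
      have h2 : B.mulVec x i ≤ 0 := by
        rw [Matrix.mulVec, dotProduct]
        apply Finset.sum_nonpos
        intro j _
        rcases eq_or_ne j i with rfl | hji
        · rw [← h]
          simp
        · exact mul_nonpos_iff.2 (Or.inr ⟨hZB i j (Ne.symm hji), hx0 j⟩)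
      linarith
  refine ⟨x, hxpos, fun j => ?_⟩
  have : Matrix.vecMul x A = B.mulVec x := (Matrix.mulVec_transpose A x).symm
  rw [this, hBx]
  norm_num
end

section
/- Let A and B be Z-matrices with A ≥ B entrywise. If B is a P-matrix, then A is a P-matrix and 0 ≤ A⁻¹ ≤ B⁻¹ entrywise. -/
open Matrix

def ZM {ι : Type} [Fintype ι] (A : Matrix ι ι ℝ) : Prop := ∀ i j, i ≠ j → A i j ≤ 0

def PM {ι : Type} [Fintype ι] [DecidableEq ι] (A : Matrix ι ι ℝ) : Prop :=
  ∀ (κ : Type) [Fintype κ] [DecidableEq κ] (f : κ → ι), Function.Injective f →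
    0 < (A.submatrix f f).det

lemma PM.submatrix' {ι κ' : Type} [Fintype ι] [DecidableEq ι] [Fintype κ'] [DecidableEq κ']
    {A : Matrix ι ι ℝ} (h : PM A) (g : κ' → ι) (hg : Function.Injective g) :
    PM (A.submatrix g g) := by
  intro κ _ _ f hf
  rw [Matrix.submatrix_submatrix]
  exact h κ (g ∘ f) (hg.comp hf)

lemma PM.diag_pos {ι : Type} [Fintype ι] [DecidableEq ι] {A : Matrix ι ι ℝ}
    (h : PM A) (i : ι) : 0 < A i i := by
  have := h (Fin 1) (fun _ => i) (fun a b _ => Subsingleton.elim a b)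
  simpa [Matrix.det_fin_one] using this

lemma mul_submatrix_id {ι l o l' o' : Type} [Fintype ι] [Fintype l] [Fintype o]
    (M : Matrix l ι ℝ) (N : Matrix ι o ℝ) (f : l' → l) (g : o' → o) :
    (M * N).submatrix f g = M.submatrix f id * N.submatrix id g := by
  ext i j
  simp [Matrix.mul_apply]

lemma fromBlocks_submatrix {m m' : Type} [Fintype m] [Fintype m']
    (a : Matrix (Fin 1) (Fin 1) ℝ) (b : Matrix (Fin 1) m ℝ) (c : Matrix m (Fin 1) ℝ)
    (d : Matrix m m ℝ) (f : m' → m) :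
    (Matrix.fromBlocks a b c d).submatrix (Sum.map id f) (Sum.map id f) =
      Matrix.fromBlocks a (b.submatrix id f) (c.submatrix f id) (d.submatrix f f) := by
  ext i j
  cases i <;> cases j <;> rfl

lemma sum_map_injective {m m' : Type} {f : m' → m} (hf : Function.Injective f) :
    Function.Injective (Sum.map (id : Fin 1 → Fin 1) f) := by
  intro x y h
  cases x <;> cases y <;> simp [Sum.map] at h ⊢ <;> first | exact h | exact hf h

lemma one_by_one_inv (a : Matrix (Fin 1) (Fin 1) ℝ) (ha : a 0 0 ≠ 0) :
    a⁻¹ = Matrix.of (fun _ _ => (a 0 0)⁻¹) := by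
  apply Matrix.inv_eq_right_inv
  ext i j
  have hi : i = 0 := Subsingleton.elim _ _
  have hj : j = 0 := Subsingleton.elim _ _
  subst hi; subst hj
  simp [Matrix.mul_apply, Fin.sum_univ_one, mul_inv_cancel₀ ha]

lemma schur_pm {m : Type} [Fintype m] [DecidableEq m]
    (a : Matrix (Fin 1) (Fin 1) ℝ) (b : Matrix (Fin 1) m ℝ) (c : Matrix m (Fin 1) ℝ)
    (d : Matrix m m ℝ) (hPM : PM (Matrix.fromBlocks a b c d)) :
    PM (d - c * a⁻¹ * b) := by
  intro κ _ _ f hf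
  have hα : 0 < a 0 0 := by
    simpa [Matrix.fromBlocks_apply₁₁] using hPM.diag_pos (Sum.inl 0)
  have hdet : a.det = a 0 0 := Matrix.det_fin_one a
  haveI : Invertible a := a.invertibleOfIsUnitDet
    (by rw [hdet]; exact isUnit_iff_ne_zero.mpr hα.ne')
  have h1 : (d - c * a⁻¹ * b).submatrix f f =
      d.submatrix f f - (c.submatrix f id) * a⁻¹ * (b.submatrix id f) := by
    have : (c * a⁻¹ * b).submatrix f f =
        (c.submatrix f id) * a⁻¹ * (b.submatrix id f) := by
      rw [mul_submatrix_id (c * a⁻¹) b f f, mul_submatrix_id c a⁻¹ f id,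
        Matrix.submatrix_id_id]
    simp only [Matrix.submatrix_sub, this, Pi.sub_apply]
  have h2 := Matrix.det_fromBlocks₁₁ a (b.submatrix id f) (c.submatrix f id) (d.submatrix f f)
  rw [invOf_eq_nonsing_inv] at h2
  have h3 := hPM _ (Sum.map id f) (sum_map_injective hf)
  rw [fromBlocks_submatrix, h2] at h3
  rw [h1]
  nlinarith [h3, hdet, hα]

lemma schur_entry {m : Type} [Fintype m]
    (a : Matrix (Fin 1) (Fin 1) ℝ) (b : Matrix (Fin 1) m ℝ) (c : Matrix m (Fin 1) ℝ)
    (d : Matrix m m ℝ) (ha : a 0 0 ≠ 0) (i j : m) :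
    (d - c * a⁻¹ * b) i j = d i j - c i 0 * (a 0 0)⁻¹ * b 0 j := by
  rw [one_by_one_inv a ha]
  simp [Matrix.mul_apply, Fin.sum_univ_one]

lemma arith1 {c v b : ℝ} (hc : c ≤ 0) (hb : b ≤ 0) (hv : 0 ≤ v) : 0 ≤ c * v * b := by
  have h1 : c * v ≤ 0 := mul_nonpos_iff.mpr (Or.inr ⟨hc, hv⟩)
  exact mul_nonneg_iff.mpr (Or.inr ⟨h1, hb⟩)

lemma arith2 {da db ca cb ba bb x y : ℝ} (hd : db ≤ da) (hca : ca ≤ 0) (hcb : cb ≤ ca)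
    (hba : ba ≤ 0) (hbb : bb ≤ ba) (hy : 0 < y) (hxy : y ≤ x) :
    db - cb * y⁻¹ * bb ≤ da - ca * x⁻¹ * ba := by
  have hx : 0 < x := lt_of_lt_of_le hy hxy
  have h0 : 0 ≤ ca * ba := mul_nonneg_iff.mpr (Or.inr ⟨hca, hba⟩)
  have h1 : ca * ba ≤ cb * bb := by nlinarith
  have hinv : x⁻¹ ≤ y⁻¹ := by
    apply inv_anti₀ hy hxy
  have hix : 0 < x⁻¹ := inv_pos.mpr hx
  have h2 : ca * x⁻¹ * ba ≤ cb * y⁻¹ * bb := by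
    nlinarith [mul_nonneg (sub_nonneg.mpr h1) hix.le,
      mul_nonneg (sub_nonneg.mpr hinv) (h0.trans h1)]
  linarith

lemma key : ∀ (n : ℕ) (A B : Matrix (Fin n) (Fin n) ℝ), ZM A → ZM B →
    (∀ i j, B i j ≤ A i j) → PM B → 0 < A.det ∧ (∀ i j, 0 ≤ A⁻¹ i j) := by
  intro n
  induction n with
  | zero =>
    intro A B _ _ _ _
    refine ⟨by simp [Matrix.det_fin_zero], fun i _ => i.elim0⟩
  | succ n ih =>
    intro A B hZA hZB hAB hPB
    let σ : (Fin 1 ⊕ Fin n) ≃ Fin (n + 1) := finSumFinEquiv.trans (finCongr (Nat.add_comm 1 n))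
    set M : Matrix (Fin 1 ⊕ Fin n) (Fin 1 ⊕ Fin n) ℝ := A.submatrix σ σ with hMdef
    set MB : Matrix (Fin 1 ⊕ Fin n) (Fin 1 ⊕ Fin n) ℝ := B.submatrix σ σ with hMBdef
    have hZM : ZM M := fun i j hij => hZA _ _ (fun h => hij (σ.injective h))
    have hZMB : ZM MB := fun i j hij => hZB _ _ (fun h => hij (σ.injective h))
    have hABM : ∀ i j, MB i j ≤ M i j := fun i j => hAB _ _
    have hPMB : PM MB := hPB.submatrix' σ σ.injective
    -- blocks
    set aA : Matrix (Fin 1) (Fin 1) ℝ := M.submatrix Sum.inl Sum.inl with haAdef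
    set bA : Matrix (Fin 1) (Fin n) ℝ := M.submatrix Sum.inl Sum.inr with hbAdef
    set cA : Matrix (Fin n) (Fin 1) ℝ := M.submatrix Sum.inr Sum.inl with hcAdef
    set dA : Matrix (Fin n) (Fin n) ℝ := M.submatrix Sum.inr Sum.inr with hdAdef
    set aB : Matrix (Fin 1) (Fin 1) ℝ := MB.submatrix Sum.inl Sum.inl with haBdef
    set bB : Matrix (Fin 1) (Fin n) ℝ := MB.submatrix Sum.inl Sum.inr with hbBdef
    set cB : Matrix (Fin n) (Fin 1) ℝ := MB.submatrix Sum.inr Sum.inl with hcBdef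
    set dB : Matrix (Fin n) (Fin n) ℝ := MB.submatrix Sum.inr Sum.inr with hdBdef
    have hMblk : M = Matrix.fromBlocks aA bA cA dA := by
      ext x y; cases x <;> cases y <;> rfl
    have hMBblk : MB = Matrix.fromBlocks aB bB cB dB := by
      ext x y; cases x <;> cases y <;> rfl
    -- diagonal positivity
    have hαB : 0 < aB 0 0 := hPMB.diag_pos (Sum.inl 0)
    have hαA : 0 < aA 0 0 := lt_of_lt_of_le hαB (hABM _ _)
    -- sign facts on blocks
    have hbAn : ∀ j, bA 0 j ≤ 0 := fun j => hZM (Sum.inl 0) (Sum.inr j) (by simp)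
    have hcAn : ∀ i, cA i 0 ≤ 0 := fun i => hZM (Sum.inr i) (Sum.inl 0) (by simp)
    have hbBn : ∀ j, bB 0 j ≤ 0 := fun j => hZMB (Sum.inl 0) (Sum.inr j) (by simp)
    have hcBn : ∀ i, cB i 0 ≤ 0 := fun i => hZMB (Sum.inr i) (Sum.inl 0) (by simp)
    -- Schur complements
    set SA : Matrix (Fin n) (Fin n) ℝ := dA - cA * aA⁻¹ * bA with hSAdef
    set SB : Matrix (Fin n) (Fin n) ℝ := dB - cB * aB⁻¹ * bB with hSBdef
    have hSAe : ∀ i j, SA i j = dA i j - cA i 0 * (aA 0 0)⁻¹ * bA 0 j :=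
      fun i j => schur_entry aA bA cA dA hαA.ne' i j
    have hSBe : ∀ i j, SB i j = dB i j - cB i 0 * (aB 0 0)⁻¹ * bB 0 j :=
      fun i j => schur_entry aB bB cB dB hαB.ne' i j
    have hZSA : ZM SA := by
      intro i j hij
      rw [hSAe]
      have hd : dA i j ≤ 0 := hZM (Sum.inr i) (Sum.inr j) (by simp [hij])
      have h1 : 0 ≤ cA i 0 * (aA 0 0)⁻¹ * bA 0 j :=
        arith1 (hcAn i) (hbAn j) (inv_pos.mpr hαA).le
      linarith
    have hZSB : ZM SB := by
      intro i j hij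
      rw [hSBe]
      have hd : dB i j ≤ 0 := hZMB (Sum.inr i) (Sum.inr j) (by simp [hij])
      have h1 : 0 ≤ cB i 0 * (aB 0 0)⁻¹ * bB 0 j :=
        arith1 (hcBn i) (hbBn j) (inv_pos.mpr hαB).le
      linarith
    have hle : ∀ i j, SB i j ≤ SA i j := by
      intro i j
      rw [hSAe, hSBe]
      exact arith2 (hABM (Sum.inr i) (Sum.inr j)) (hcAn i) (hABM (Sum.inr i) (Sum.inl 0))
        (hbAn j) (hABM (Sum.inl 0) (Sum.inr j)) hαB (hABM (Sum.inl 0) (Sum.inl 0))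
    have hPSB : PM SB := by
      rw [hSBdef]
      have := schur_pm aB bB cB dB (by rw [← hMBblk]; exact hPMB)
      exact this
    obtain ⟨hdetSA, hinvSA⟩ := ih SA SB hZSA hZSB hle hPSB
    -- determinant
    haveI : Invertible aA := aA.invertibleOfIsUnitDet
      (by rw [Matrix.det_fin_one]; exact isUnit_iff_ne_zero.mpr hαA.ne')
    have hdetA : 0 < A.det := by
      have h1 : M.det = A.det := Matrix.det_submatrix_equiv_self σ A
      have h2 : M.det = aA.det * SA.det := by
        rw [hMblk, Matrix.det_fromBlocks₁₁, invOf_eq_nonsing_inv]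
      have h3 : 0 < aA.det := by rw [Matrix.det_fin_one]; exact hαA
      rw [← h1, h2]
      exact mul_pos h3 hdetSA
    refine ⟨hdetA, ?_⟩
    -- block inverse formula
    have haAinv : aA⁻¹ = Matrix.of (fun _ _ => (aA 0 0)⁻¹) := one_by_one_inv aA hαA.ne'
    have haAmul : aA * aA⁻¹ = 1 := Matrix.mul_nonsing_inv _
      (by rw [Matrix.det_fin_one]; exact isUnit_iff_ne_zero.mpr hαA.ne')
    have hSmul : SA * SA⁻¹ = 1 := Matrix.mul_nonsing_inv _
      (isUnit_iff_ne_zero.mpr hdetSA.ne')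
    have ha' : ∀ (o : Type) [Fintype o] (X : Matrix (Fin 1) o ℝ),
        aA * (aA⁻¹ * X) = X := by
      intro o _ X; rw [← Matrix.mul_assoc, haAmul, Matrix.one_mul]
    have hS' : ∀ (o : Type) [Fintype o] (X : Matrix (Fin n) o ℝ),
        SA * (SA⁻¹ * X) = X := by
      intro o _ X; rw [← Matrix.mul_assoc, hSmul, Matrix.one_mul]
    have hdSA : dA = SA + cA * aA⁻¹ * bA := by
      rw [hSAdef, sub_add_cancel]
    set N : Matrix (Fin 1 ⊕ Fin n) (Fin 1 ⊕ Fin n) ℝ :=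
      Matrix.fromBlocks (aA⁻¹ + aA⁻¹ * bA * SA⁻¹ * cA * aA⁻¹) (-(aA⁻¹ * bA * SA⁻¹))
        (-(SA⁻¹ * cA * aA⁻¹)) SA⁻¹ with hNdef
    have hMN : M * N = 1 := by
      rw [hMblk, hNdef, Matrix.fromBlocks_multiply, ← Matrix.fromBlocks_one]
      rw [Matrix.fromBlocks_inj]
      refine ⟨?_, ?_, ?_, ?_⟩
      · simp only [Matrix.mul_add, Matrix.mul_neg, Matrix.mul_assoc]
        rw [haAmul, ha']
        abel
      · simp only [Matrix.mul_neg, Matrix.mul_assoc]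
        rw [ha']
        abel
      · rw [hdSA]
        simp only [Matrix.mul_add, Matrix.add_mul, Matrix.mul_neg, Matrix.mul_assoc]
        rw [hS']
        abel
      · rw [hdSA]
        simp only [Matrix.add_mul, Matrix.mul_neg, Matrix.mul_assoc]
        rw [hSmul]
        abel
    have hMinv : M⁻¹ = N := Matrix.inv_eq_right_inv hMN
    -- entries of N are nonnegative
    have hinvα : 0 ≤ (aA 0 0)⁻¹ := (inv_pos.mpr hαA).le
    have haAe : aA⁻¹ 0 0 = (aA 0 0)⁻¹ := by rw [haAinv]; rfl
    have h1 : ∀ l, (aA⁻¹ * bA) 0 l ≤ 0 := by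
      intro l
      rw [Matrix.mul_apply, Fin.sum_univ_one, haAe]
      exact mul_nonpos_iff.mpr (Or.inl ⟨hinvα, hbAn l⟩)
    have h2 : ∀ k, (aA⁻¹ * bA * SA⁻¹) 0 k ≤ 0 := by
      intro k
      rw [Matrix.mul_apply]
      exact Finset.sum_nonpos fun l _ => mul_nonpos_iff.mpr (Or.inr ⟨h1 l, hinvSA l k⟩)
    have h3 : 0 ≤ (aA⁻¹ * bA * SA⁻¹ * cA) 0 0 := by
      rw [Matrix.mul_apply]
      exact Finset.sum_nonneg fun k _ => mul_nonneg_iff.mpr (Or.inr ⟨h2 k, hcAn k⟩)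
    have h4 : 0 ≤ (aA⁻¹ * bA * SA⁻¹ * cA * aA⁻¹) 0 0 := by
      rw [Matrix.mul_apply, Fin.sum_univ_one, haAe]
      exact mul_nonneg h3 hinvα
    have h5 : ∀ i, (SA⁻¹ * cA) i 0 ≤ 0 := by
      intro i
      rw [Matrix.mul_apply]
      exact Finset.sum_nonpos fun l _ => mul_nonpos_iff.mpr (Or.inl ⟨hinvSA i l, hcAn l⟩)
    have h6 : ∀ i, (SA⁻¹ * cA * aA⁻¹) i 0 ≤ 0 := by
      intro i
      rw [Matrix.mul_apply, Fin.sum_univ_one, haAe]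
      exact mul_nonpos_iff.mpr (Or.inr ⟨h5 i, hinvα⟩)
    have hNnn : ∀ x y, 0 ≤ N x y := by
      intro x y
      rw [hNdef]
      cases x with
      | inl i =>
        cases y with
        | inl j =>
          have hi : i = 0 := Subsingleton.elim _ _
          have hj : j = 0 := Subsingleton.elim _ _
          subst hi; subst hj
          show 0 ≤ (aA⁻¹ + aA⁻¹ * bA * SA⁻¹ * cA * aA⁻¹) 0 0
          rw [Matrix.add_apply, haAe]
          exact add_nonneg hinvα h4
        | inr j =>
          show 0 ≤ (-(aA⁻¹ * bA * SA⁻¹)) i j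
          have hi : i = 0 := Subsingleton.elim _ _
          subst hi
          rw [Matrix.neg_apply]
          linarith [h2 j]
      | inr i =>
        cases y with
        | inl j =>
          show 0 ≤ (-(SA⁻¹ * cA * aA⁻¹)) i j
          have hj : j = 0 := Subsingleton.elim _ _
          subst hj
          rw [Matrix.neg_apply]
          linarith [h6 i]
        | inr j =>
          exact hinvSA i j
    -- transfer back to A⁻¹
    have hsub : M⁻¹ = A⁻¹.submatrix σ σ := Matrix.inv_submatrix_equiv A σ σ
    intro i j
    have e1 : A⁻¹ i j = N (σ.symm i) (σ.symm j) := by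
      rw [hMinv] at hsub
      have := congrFun (congrFun hsub.symm (σ.symm i)) (σ.symm j)
      rwa [Matrix.submatrix_apply, Equiv.apply_symm_apply, Equiv.apply_symm_apply] at this
    rw [e1]
    exact hNnn _ _



lemma pm_of_isP {n : ℕ} {B : Matrix (Fin n) (Fin n) ℝ} (h : IsPMatrix B) : PM B := by
  intro κ _ _ f hf
  classical
  set S : Finset (Fin n) := Finset.univ.image f with hS
  have hmem : ∀ k, f k ∈ S := fun k => Finset.mem_image.mpr ⟨k, Finset.mem_univ _, rfl⟩
  have hsurj : ∀ x : {x // x ∈ S}, ∃ k, f k = (x : Fin n) := by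
    rintro ⟨x, hx⟩
    obtain ⟨k, _, hk⟩ := Finset.mem_image.mp hx
    exact ⟨k, hk⟩
  let e : κ ≃ {x // x ∈ S} := Equiv.ofBijective (fun k => ⟨f k, hmem k⟩)
    ⟨fun a b hab => hf (congrArg Subtype.val hab),
     fun x => by obtain ⟨k, hk⟩ := hsurj x; exact ⟨k, Subtype.ext hk⟩⟩
  have heq : B.submatrix f f =
      (B.submatrix (fun i : {x // x ∈ S} => (i : Fin n))
        (fun i : {x // x ∈ S} => (i : Fin n))).submatrix e e := by
    ext i j; rfl
  rw [heq, Matrix.det_submatrix_equiv_self]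
  exact h S

lemma isP_of_pm {n : ℕ} {A : Matrix (Fin n) (Fin n) ℝ} (h : PM A) : IsPMatrix A := by
  intro S
  exact h {x // x ∈ S} (fun i => (i : Fin n)) Subtype.coe_injective

theorem z_matrix_comparison {n : ℕ} (A B : Matrix (Fin n) (Fin n) ℝ)
    (hZA : IsZMatrix A) (hZB : IsZMatrix B)
    (hAB : ∀ i j, B i j ≤ A i j) (hPB : IsPMatrix B) :
    IsPMatrix A ∧ (∀ i j, 0 ≤ A⁻¹ i j) ∧ (∀ i j, A⁻¹ i j ≤ B⁻¹ i j) := by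
  have hZA' : ZM A := hZA
  have hZB' : ZM B := hZB
  have hPB' : PM B := pm_of_isP hPB
  obtain ⟨hdetA, hinvA⟩ := key n A B hZA' hZB' hAB hPB'
  obtain ⟨hdetB, hinvB⟩ := key n B B hZB' hZB' (fun i j => le_refl _) hPB'
  have hPMA : PM A := by
    intro κ _ _ f hf
    classical
    let e : Fin (Fintype.card κ) ≃ κ := (Fintype.equivFin κ).symm
    have hfe : Function.Injective (f ∘ e) := hf.comp e.injective
    have h := key (Fintype.card κ) (A.submatrix (f ∘ e) (f ∘ e)) (B.submatrix (f ∘ e) (f ∘ e))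
      (fun i j hij => hZA' _ _ fun hc => hij (hfe hc))
      (fun i j hij => hZB' _ _ fun hc => hij (hfe hc))
      (fun i j => hAB _ _)
      (hPB'.submatrix' (f ∘ e) hfe)
    have heq : A.submatrix (f ∘ e) (f ∘ e) = (A.submatrix f f).submatrix e e := by
      ext i j; rfl
    rw [heq, Matrix.det_submatrix_equiv_self] at h
    exact h.1
  refine ⟨isP_of_pm hPMA, hinvA, ?_⟩
  -- comparison of inverses
  have hA1 : A * A⁻¹ = 1 := Matrix.mul_nonsing_inv _ (isUnit_iff_ne_zero.mpr hdetA.ne')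
  have hB1 : B⁻¹ * B = 1 := Matrix.nonsing_inv_mul _ (isUnit_iff_ne_zero.mpr hdetB.ne')
  have hident : B⁻¹ - A⁻¹ = B⁻¹ * (A - B) * A⁻¹ := by
    rw [Matrix.mul_sub, Matrix.sub_mul, Matrix.mul_assoc, hA1, Matrix.mul_one, hB1,
      Matrix.one_mul]
  intro i j
  have hnn : 0 ≤ (B⁻¹ * (A - B) * A⁻¹) i j := by
    rw [Matrix.mul_apply]
    apply Finset.sum_nonneg
    intro k _
    apply mul_nonneg _ (hinvA k j)
    rw [Matrix.mul_apply]
    apply Finset.sum_nonneg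
    intro l _
    apply mul_nonneg (hinvB i l)
    rw [Matrix.sub_apply]
    linarith [hAB l k]
  have := congrFun (congrFun hident i) j
  rw [Matrix.sub_apply] at this
  linarith [this ▸ hnn]
end

section
/- Let p be a noiseless almost equilibrium, i.e., there exist nonnegative scalars v_q such that 0 ≤ p_q(k) ⟂ Σ_{r=1}^Q |H_{qr}(k)|² p_r(k) − |H_{qq}(k)|² v_q ≥ 0 for all k, q, where all |H_{qr}(k)|² > 0. If p ≠ 0, then for every subchannel k, Σ_{r=1}^Q p_r(k) > 0. -/
open Finset

theorem noiseless_equilibrium_every_subchannel_used {Q N : ℕ}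
    (H : Fin Q → Fin Q → Fin N → ℝ)   -- H q r k = |H_{qr}(k)|²
    (hH : ∀ q r k, 0 < H q r k)
    (p : Fin Q → Fin N → ℝ) (v : Fin Q → ℝ)
    (hv : ∀ q, 0 ≤ v q)
    (hpnonneg : ∀ q k, 0 ≤ p q k)
    (hresid : ∀ q k, 0 ≤ (∑ r, H q r k * p r k) - H q q k * v q)
    (hcompl : ∀ q k, p q k * ((∑ r, H q r k * p r k) - H q q k * v q) = 0)
    (hpne : p ≠ 0) :
    ∀ k, 0 < ∑ r, p r k := by
  -- find a positive coordinate
  have hex : ∃ q k, p q k ≠ 0 := by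
    by_contra h
    push_neg at h
    exact hpne (funext fun q => funext fun k => h q k)
  obtain ⟨q0, k0, hq0⟩ := hex
  have hp0 : 0 < p q0 k0 := (hpnonneg q0 k0).lt_of_ne (Ne.symm hq0)
  -- residual is zero at (q0,k0)
  have hres0 : (∑ r, H q0 r k0 * p r k0) - H q0 q0 k0 * v q0 = 0 := by
    have := hcompl q0 k0
    rcases mul_eq_zero.mp this with h | h
    · exact absurd h hq0
    · exact h
  have hsum_pos : 0 < ∑ r, H q0 r k0 * p r k0 := by
    apply Finset.sum_pos'
    · intro r _; exact mul_nonneg (hH q0 r k0).le (hpnonneg r k0)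
    · exact ⟨q0, Finset.mem_univ q0, mul_pos (hH q0 q0 k0) hp0⟩
  have hv0 : 0 < v q0 := by
    have h1 : H q0 q0 k0 * v q0 = ∑ r, H q0 r k0 * p r k0 := by linarith
    nlinarith [hH q0 q0 k0]
  intro k
  by_contra h
  push_neg at h
  have hzero : ∀ r, p r k = 0 := by
    have hs : ∑ r, p r k = 0 :=
      le_antisymm h (Finset.sum_nonneg fun r _ => hpnonneg r k)
    intro r
    exact (Finset.sum_eq_zero_iff_of_nonneg (fun r _ => hpnonneg r k)).mp hs r
      (Finset.mem_univ r)
  have hr := hresid q0 k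
  have hsz : ∑ r, H q0 r k * p r k = 0 := by
    apply Finset.sum_eq_zero
    intro r _; rw [hzero r, mul_zero]
  rw [hsz] at hr
  nlinarith [hH q0 q0 k]
end

section
/- Consider the single-subchannel (N = 1) power control game: find p ∈ ℝ^Q_+ with log(1 + |H_{qq}|²p_q/(σ_q² + Σ_{r≠q}|H_{qr}|²p_r)) = R*_q for all q. If all σ_q² > 0 and all gains are positive, this system has a (nonnegative) solution for some choice of σ > 0 if and only if the matrix Z(R*) with Z_{qq} = |H_{qq}|² and Z_{qr} = −(e^{R*_q}−1)|H_{qr}|² (q ≠ r) is a P-matrix; in that case the solution is unique for every σ > 0 and equals Z(R*)⁻¹ (σ_q²(e^{R*_q}−1))_q. -/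
open Finset Matrix

/-- The matrix `Z(R*)` of the single-subchannel power control game. -/
noncomputable def Zmat {Q : ℕ} (H : Fin Q → Fin Q → ℝ) (Rstar : Fin Q → ℝ) :
    Matrix (Fin Q) (Fin Q) ℝ :=
  Matrix.of fun q r => if q = r then H q q else -(Real.exp (Rstar q) - 1) * H q r


/-- Schur complement determinant formula, pivoting on the (0,0) entry. -/
lemma schur_first {n : ℕ} (M : Matrix (Fin (n+1)) (Fin (n+1)) ℝ) (ha : M 0 0 ≠ 0) :
    M.det = M 0 0 * (Matrix.of fun i j : Fin n =>
      M i.succ j.succ - M i.succ 0 * M 0 j.succ / M 0 0).det := by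
  classical
  set e : Fin 1 ⊕ Fin n ≃ Fin (n+1) :=
    finSumFinEquiv.trans (finCongr (Nat.add_comm 1 n)) with he
  have he0 : e (Sum.inl 0) = 0 := by
    apply Fin.ext; simp [he, finSumFinEquiv]
  have heS : ∀ j : Fin n, e (Sum.inr j) = j.succ := by
    intro j; apply Fin.ext; simp [he, finSumFinEquiv, Nat.add_comm]
  set A11 : Matrix (Fin 1) (Fin 1) ℝ := Matrix.of fun _ _ => M 0 0 with hA11
  set A12 : Matrix (Fin 1) (Fin n) ℝ := Matrix.of fun _ j => M 0 j.succ with hA12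
  set A21 : Matrix (Fin n) (Fin 1) ℝ := Matrix.of fun i _ => M i.succ 0 with hA21
  set A22 : Matrix (Fin n) (Fin n) ℝ := Matrix.of fun i j => M i.succ j.succ with hA22
  have hsub : M.submatrix e e = Matrix.fromBlocks A11 A12 A21 A22 := by
    ext i j
    cases i with
    | inl i =>
      cases j with
      | inl j =>
        simp only [Matrix.submatrix_apply, Matrix.fromBlocks_apply₁₁]
        rw [Subsingleton.elim i 0, Subsingleton.elim j 0, he0]; rfl
      | inr j =>
        simp only [Matrix.submatrix_apply, Matrix.fromBlocks_apply₁₂]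
        rw [Subsingleton.elim i 0, he0, heS]; rfl
    | inr i =>
      cases j with
      | inl j =>
        simp only [Matrix.submatrix_apply, Matrix.fromBlocks_apply₂₁]
        rw [Subsingleton.elim j 0, he0, heS]; rfl
      | inr j =>
        simp only [Matrix.submatrix_apply, Matrix.fromBlocks_apply₂₂]
        rw [heS, heS]; rfl
  have hdet : M.det = (Matrix.fromBlocks A11 A12 A21 A22).det := by
    rw [← hsub, Matrix.det_submatrix_equiv_self]
  have hA11det : IsUnit A11.det := by
    rw [Matrix.det_fin_one]; exact isUnit_iff_ne_zero.2 ha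
  haveI : Invertible A11 := A11.invertibleOfIsUnitDet hA11det
  rw [hdet, Matrix.det_fromBlocks₁₁]
  have hinv : (⅟A11 : Matrix (Fin 1) (Fin 1) ℝ) = Matrix.of fun _ _ => (M 0 0)⁻¹ := by
    rw [Matrix.invOf_eq_nonsing_inv, Matrix.inv_def, Matrix.adjugate_fin_one,
      Matrix.det_fin_one]
    ext i j
    rw [Subsingleton.elim i j]
    simp [Ring.inverse_eq_inv', hA11, Matrix.one_apply_eq]
  have hS : A22 - A21 * ⅟A11 * A12 = Matrix.of fun i j : Fin n =>
      M i.succ j.succ - M i.succ 0 * M 0 j.succ / M 0 0 := by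
    rw [hinv]
    ext i j
    simp only [hA11, hA12, hA21, hA22, Matrix.sub_apply, Matrix.mul_apply, Matrix.of_apply, Fin.sum_univ_one]
    ring
  rw [hS, Matrix.det_fin_one]
  rfl


/-- A Z-matrix with positive row sums has positive determinant. -/
lemma det_pos_of_Z_rowsum : ∀ (n : ℕ) (A : Matrix (Fin n) (Fin n) ℝ),
    (∀ i j, i ≠ j → A i j ≤ 0) → (∀ i, 0 < ∑ j, A i j) → 0 < A.det := by
  intro n
  induction n with
  | zero => intro A _ _; simp [Matrix.det_isEmpty]
  | succ n ih =>
    intro A hZ hrow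
    have hoff0 : ∀ j : Fin n, A 0 j.succ ≤ 0 := fun j => hZ _ _ (Fin.succ_ne_zero j).symm
    have ha : 0 < A 0 0 := by
      have h1 : ∑ j, A 0 j = A 0 0 + ∑ j : Fin n, A 0 j.succ := Fin.sum_univ_succ _
      have h2 : ∑ j : Fin n, A 0 j.succ ≤ 0 :=
        Finset.sum_nonpos fun j _ => hoff0 j
      have := hrow 0
      linarith
    set S : Matrix (Fin n) (Fin n) ℝ := Matrix.of fun i j =>
      A i.succ j.succ - A i.succ 0 * A 0 j.succ / A 0 0 with hSdef
    have hSZ : ∀ i j, i ≠ j → S i j ≤ 0 := by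
      intro i j hij
      have h1 : A i.succ j.succ ≤ 0 := hZ _ _ (fun h => hij (Fin.succ_injective n h))
      have h2 : A i.succ 0 ≤ 0 := hZ _ _ (Fin.succ_ne_zero i)
      have h3 : A 0 j.succ ≤ 0 := hoff0 j
      have h4 : 0 ≤ A i.succ 0 * A 0 j.succ / A 0 0 :=
        div_nonneg (by nlinarith) ha.le
      simp only [hSdef, Matrix.of_apply]
      linarith
    have hSrow : ∀ i, 0 < ∑ j, S i j := by
      intro i
      have hsplit : ∀ k : Fin (n+1), ∑ j, A k j = A k 0 + ∑ j : Fin n, A k j.succ :=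
        fun k => Fin.sum_univ_succ _
      have hsum : ∑ j, S i j
          = (∑ j : Fin n, A i.succ j.succ) - A i.succ 0 / A 0 0 * ∑ j : Fin n, A 0 j.succ := by
        simp only [hSdef, Matrix.of_apply]
        rw [Finset.sum_sub_distrib, Finset.mul_sum]
        congr 1
        apply Finset.sum_congr rfl
        intro j _
        ring
      have h5 : ∑ j : Fin n, A i.succ j.succ = (∑ j, A i.succ j) - A i.succ 0 := by
        rw [hsplit i.succ]; ring
      have h6 : ∑ j : Fin n, A 0 j.succ = (∑ j, A 0 j) - A 0 0 := by
        rw [hsplit 0]; ring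
      have h2 : A i.succ 0 ≤ 0 := hZ _ _ (Fin.succ_ne_zero i)
      have h7 : A i.succ 0 / A 0 0 ≤ 0 := div_nonpos_of_nonpos_of_nonneg h2 ha.le
      have h8 := hrow i.succ
      have h9 := hrow 0
      rw [hsum, h5, h6]
      have h10 : A i.succ 0 / A 0 0 * ((∑ j, A 0 j) - A 0 0)
          = A i.succ 0 / A 0 0 * (∑ j, A 0 j) - A i.succ 0 / A 0 0 * A 0 0 := by ring
      have h11 : A i.succ 0 / A 0 0 * A 0 0 = A i.succ 0 := by
        field_simp
      have h12 : A i.succ 0 / A 0 0 * (∑ j, A 0 j) ≤ 0 :=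
        mul_nonpos_of_nonpos_of_nonneg h7 h9.le
      nlinarith
    have hdet := schur_first A ha.ne'
    have hSpos := ih S hSZ hSrow
    rw [hdet]
    exact mul_pos ha hSpos

lemma det_pos_of_Z_rowsum' {ι : Type*} [Fintype ι] [DecidableEq ι]
    (A : Matrix ι ι ℝ) (hZ : ∀ i j, i ≠ j → A i j ≤ 0) (hrow : ∀ i, 0 < ∑ j, A i j) :
    0 < A.det := by
  let e := Fintype.equivFin ι
  have h : A.det = (A.submatrix e.symm e.symm).det :=
    (Matrix.det_submatrix_equiv_self e.symm A).symm
  rw [h]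
  apply det_pos_of_Z_rowsum
  · intro i j hij
    exact hZ _ _ fun hc => hij (e.symm.injective hc)
  · intro i
    rw [show (∑ j, A.submatrix e.symm e.symm i j) = ∑ j, A (e.symm i) (e.symm j) from rfl,
      Equiv.sum_comp e.symm (fun j => A (e.symm i) j)]
    exact hrow _


lemma isPMatrix_of_pos_vec {Q : ℕ} (A : Matrix (Fin Q) (Fin Q) ℝ)
    (hZ : ∀ i j, i ≠ j → A i j ≤ 0) (p : Fin Q → ℝ) (hp : ∀ i, 0 < p i)
    (hAp : ∀ i, 0 < A.mulVec p i) : IsPMatrix A := by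
  intro S
  set B : Matrix {x // x ∈ S} {x // x ∈ S} ℝ :=
    Matrix.of fun i j => p (j : Fin Q) * A (i : Fin Q) (j : Fin Q) with hBdef
  have hdet : B.det = (∏ j : {x // x ∈ S}, p (j : Fin Q)) *
      (A.submatrix (fun i : {x // x ∈ S} => (i : Fin Q))
        (fun i : {x // x ∈ S} => (i : Fin Q))).det :=
    Matrix.det_mul_row _ _
  have hBpos : 0 < B.det := by
    apply det_pos_of_Z_rowsum' B
    · intro i j hij
      have hne : (i : Fin Q) ≠ (j : Fin Q) := fun hc => hij (Subtype.ext hc)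
      have := hZ _ _ hne
      have := (hp (j : Fin Q)).le
      simp only [hBdef, Matrix.of_apply]
      exact mul_nonpos_of_nonneg_of_nonpos (hp _).le (hZ _ _ hne)
    · intro i
      have hcoe : ∑ j : {x // x ∈ S}, B i j = ∑ j ∈ S, p j * A (i : Fin Q) j := by
        rw [← Finset.sum_coe_sort S (fun j => p j * A (i : Fin Q) j)]
        simp [hBdef]
      have hsd : ∑ j ∈ univ \ S, p j * A (i : Fin Q) j ≤ 0 := by
        apply Finset.sum_nonpos
        intro j hj
        have hjS : j ∉ S := (Finset.mem_sdiff.1 hj).2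
        have hne : (i : Fin Q) ≠ j := fun hc => hjS (hc ▸ i.2)
        exact mul_nonpos_of_nonneg_of_nonpos (hp _).le (hZ _ _ hne)
      have hall : ∑ j ∈ univ \ S, p j * A (i : Fin Q) j + ∑ j ∈ S, p j * A (i : Fin Q) j
          = ∑ j, p j * A (i : Fin Q) j := Finset.sum_sdiff (Finset.subset_univ S)
      have hmv : 0 < ∑ j, p j * A (i : Fin Q) j := by
        have := hAp (i : Fin Q)
        have hmv' : A.mulVec p (i : Fin Q) = ∑ j, A (i : Fin Q) j * p j := rfl
        rw [hmv'] at this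
        calc (0:ℝ) < ∑ j, A (i : Fin Q) j * p j := this
        _ = ∑ j, p j * A (i : Fin Q) j := by
          apply Finset.sum_congr rfl; intro j _; ring
      rw [hcoe]
      linarith
  have hprod : 0 < ∏ j : {x // x ∈ S}, p (j : Fin Q) :=
    Finset.prod_pos fun j _ => hp _
  nlinarith [hdet, hBpos, hprod]

lemma nonneg_of_mulVec_nonneg {n : ℕ} (A : Matrix (Fin n) (Fin n) ℝ)
    (hZ : ∀ i j, i ≠ j → A i j ≤ 0) (p : Fin n → ℝ) (hp : ∀ i, 0 < p i)
    (hAp : ∀ i, 0 < A.mulVec p i) (x : Fin n → ℝ) (hx : ∀ i, 0 ≤ A.mulVec x i) :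
    ∀ i, 0 ≤ x i := by
  by_contra hneg
  push_neg at hneg
  obtain ⟨i₁, hi₁⟩ := hneg
  obtain ⟨i₀, -, hi₀⟩ := Finset.exists_max_image Finset.univ (fun i => -x i / p i)
    ⟨i₁, Finset.mem_univ i₁⟩
  set t : ℝ := -x i₀ / p i₀ with ht
  have htpos : 0 < t := lt_of_lt_of_le (div_pos (neg_pos.2 hi₁) (hp i₁)) (hi₀ i₁ (mem_univ _))
  set y : Fin n → ℝ := fun j => x j + t * p j with hy
  have hynn : ∀ j, 0 ≤ y j := by
    intro j
    have := hi₀ j (mem_univ j)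
    rw [div_le_iff₀ (hp j)] at this
    simp only [hy]
    nlinarith [hp j]
  have hy0 : y i₀ = 0 := by
    have hc : -x i₀ / p i₀ * p i₀ = -x i₀ := div_mul_cancel₀ _ (hp i₀).ne'
    simp only [hy, ht]
    linarith
  have hAy : A.mulVec y i₀ = A.mulVec x i₀ + t * A.mulVec p i₀ := by
    simp only [Matrix.mulVec, dotProduct, hy]
    rw [Finset.mul_sum, ← Finset.sum_add_distrib]
    apply Finset.sum_congr rfl
    intro j _
    ring
  have hpos : 0 < A.mulVec y i₀ := by
    rw [hAy]
    have := hx i₀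
    nlinarith [hAp i₀]
  have hnonpos : A.mulVec y i₀ ≤ 0 := by
    have hsplit : A.mulVec y i₀ = A i₀ i₀ * y i₀ + ∑ j ∈ univ.erase i₀, A i₀ j * y j := by
      simp only [Matrix.mulVec, dotProduct]
      rw [← Finset.add_sum_erase _ _ (Finset.mem_univ i₀)]
    rw [hsplit, hy0, mul_zero, zero_add]
    apply Finset.sum_nonpos
    intro j hj
    exact mul_nonpos_of_nonpos_of_nonneg (hZ _ _ (Finset.ne_of_mem_erase hj).symm) (hynn j)
  linarith

/-- All leading principal minors are positive. -/
def LeadPos {n : ℕ} (A : Matrix (Fin n) (Fin n) ℝ) : Prop :=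
  ∀ k (h : k ≤ n), 0 < (A.submatrix (Fin.castLE h) (Fin.castLE h)).det

lemma exists_eps {n : ℕ} (f g : Fin n → ℝ) (hf : ∀ i, 0 < f i) :
    ∃ ε : ℝ, 0 < ε ∧ ∀ i, 0 < f i + ε * g i := by
  rcases isEmpty_or_nonempty (Fin n) with h | h
  · exact ⟨1, one_pos, fun i => isEmptyElim i⟩
  have hne : (Finset.univ : Finset (Fin n)).Nonempty := Finset.univ_nonempty
  set m : ℝ := Finset.univ.inf' hne f with hm
  have hmpos : 0 < m := by
    rw [Finset.lt_inf'_iff]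
    exact fun i _ => hf i
  set c : ℝ := Finset.univ.sup' hne (fun i => |g i|) with hc
  have hcnn : 0 ≤ c := by
    obtain ⟨i⟩ := h
    exact le_trans (abs_nonneg (g i)) (Finset.le_sup' (fun i => |g i|) (Finset.mem_univ i))
  refine ⟨m / (2 * (c + 1)), by positivity, fun i => ?_⟩
  have h1 : m ≤ f i := Finset.inf'_le _ (Finset.mem_univ i)
  have h2 : |g i| ≤ c := Finset.le_sup' (fun i => |g i|) (Finset.mem_univ i)
  have h3 : -(c) ≤ g i := by
    have := abs_le.1 (le_trans (le_refl _) h2)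
    linarith [neg_abs_le (g i), abs_le.1 h2]
  have heps : (0:ℝ) < m / (2 * (c + 1)) := by positivity
  have h4 : m / (2 * (c + 1)) * g i ≥ -(m / (2 * (c + 1)) * c) := by nlinarith
  have h5 : m / (2 * (c + 1)) * c ≤ m / 2 := by
    rw [div_mul_eq_mul_div, div_le_div_iff₀ (by positivity) (by positivity)]
    nlinarith
  linarith

lemma leadPos_of_isPMatrix {n : ℕ} (A : Matrix (Fin n) (Fin n) ℝ)
    (hP : IsPMatrix A) : LeadPos A := by
  intro k hk
  set S : Finset (Fin n) := Finset.univ.map ⟨Fin.castLE hk, Fin.castLE_injective hk⟩ with hS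
  have hmem : ∀ i : Fin k, Fin.castLE hk i ∈ S := by
    intro i
    rw [hS]
    exact Finset.mem_map_of_mem _ (Finset.mem_univ i)
  have hbij : Function.Bijective (fun i : Fin k =>
      (⟨Fin.castLE hk i, hmem i⟩ : {x // x ∈ S})) := by
    rw [Fintype.bijective_iff_injective_and_card]
    constructor
    · intro a b hab
      exact Fin.castLE_injective hk (congrArg Subtype.val hab)
    · rw [Fintype.card_coe, hS, Finset.card_map, Finset.card_univ, Fintype.card_fin]
  set e : Fin k ≃ {x // x ∈ S} := Equiv.ofBijective _ hbij with he
  have := hP S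
  rw [← Matrix.det_submatrix_equiv_self e] at this
  convert this using 2
  ext i j; rfl

lemma exists_pos_of_lead : ∀ (n : ℕ) (A : Matrix (Fin n) (Fin n) ℝ),
    (∀ i j, i ≠ j → A i j ≤ 0) → LeadPos A →
    ∃ p : Fin n → ℝ, (∀ i, 0 < p i) ∧ ∀ i, 0 < A.mulVec p i := by
  intro n
  induction n with
  | zero =>
    intro A _ _
    exact ⟨fun _ => 1, fun i => i.elim0, fun i => i.elim0⟩
  | succ n ih =>
    intro A hZ hLead
    have ha : 0 < A 0 0 := by
      have h1 := hLead 1 (Nat.succ_le_succ (Nat.zero_le n))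
      rw [Matrix.det_fin_one] at h1
      exact h1
    have hoff0 : ∀ j : Fin n, A 0 j.succ ≤ 0 := fun j => hZ _ _ (Fin.succ_ne_zero j).symm
    have hcol0 : ∀ i : Fin n, A i.succ 0 ≤ 0 := fun i => hZ _ _ (Fin.succ_ne_zero i)
    set S : Matrix (Fin n) (Fin n) ℝ := Matrix.of fun i j =>
      A i.succ j.succ - A i.succ 0 * A 0 j.succ / A 0 0 with hSdef
    have hSZ : ∀ i j, i ≠ j → S i j ≤ 0 := by
      intro i j hij
      have h1 : A i.succ j.succ ≤ 0 := hZ _ _ (fun h => hij (Fin.succ_injective n h))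
      have h4 : 0 ≤ A i.succ 0 * A 0 j.succ / A 0 0 :=
        div_nonneg (by nlinarith [hcol0 i, hoff0 j]) ha.le
      simp only [hSdef, Matrix.of_apply]
      linarith
    have hSlead : LeadPos S := by
      intro k hkn
      have hk1 : k + 1 ≤ n + 1 := Nat.succ_le_succ hkn
      set M : Matrix (Fin (k+1)) (Fin (k+1)) ℝ :=
        A.submatrix (Fin.castLE hk1) (Fin.castLE hk1) with hMdef
      have hM00 : M 0 0 = A 0 0 := rfl
      have hMdetpos := hLead (k+1) hk1
      have hcast : ∀ i : Fin k, Fin.castLE hk1 i.succ = (Fin.castLE hkn i).succ := by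
        intro i; apply Fin.ext; simp
      have hSsub : (Matrix.of fun i j : Fin k =>
          M i.succ j.succ - M i.succ 0 * M 0 j.succ / M 0 0)
          = S.submatrix (Fin.castLE hkn) (Fin.castLE hkn) := by
        ext i j
        simp only [Matrix.of_apply, Matrix.submatrix_apply, hMdef, hSdef, hcast]
        rfl
      have hschur := schur_first M (by rw [hM00]; exact ha.ne')
      rw [hSsub, hM00] at hschur
      rw [hschur] at hMdetpos
      nlinarith
    obtain ⟨q, hq, hSq⟩ := ih S hSZ hSlead
    set t : ℝ := (-(∑ j : Fin n, A 0 j.succ * q j)) / A 0 0 with ht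
    have htnn : 0 ≤ t := by
      apply div_nonneg _ ha.le
      have : ∑ j : Fin n, A 0 j.succ * q j ≤ 0 :=
        Finset.sum_nonpos fun j _ => mul_nonpos_of_nonpos_of_nonneg (hoff0 j) (hq j).le
      linarith
    have hsum0 : ∑ j : Fin n, A 0 j.succ * q j = -(t * A 0 0) := by
      have hc : t * A 0 0 = -(∑ j : Fin n, A 0 j.succ * q j) := by
        rw [ht]; exact div_mul_cancel₀ _ ha.ne'
      linarith
    obtain ⟨ε, hε, hεi⟩ := exists_eps (S.mulVec q) (fun i => A i.succ 0) hSq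
    set p : Fin (n+1) → ℝ := Fin.cases (t + ε) q with hpdef
    have hp : ∀ i, 0 < p i := by
      intro i
      rcases Fin.eq_zero_or_eq_succ i with rfl | ⟨j, rfl⟩
      · simp only [hpdef, Fin.cases_zero]; linarith
      · simp only [hpdef, Fin.cases_succ]; exact hq j
    have hkey : ∀ i : Fin (n+1),
        A.mulVec p i = A i 0 * (t + ε) + ∑ j : Fin n, A i j.succ * q j := by
      intro i
      simp only [Matrix.mulVec, dotProduct]
      rw [Fin.sum_univ_succ]
      simp only [hpdef, Fin.cases_zero, Fin.cases_succ]
    refine ⟨p, hp, fun i => ?_⟩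
    rcases Fin.eq_zero_or_eq_succ i with rfl | ⟨i', rfl⟩
    · rw [hkey 0, hsum0]
      have : A 0 0 * (t + ε) + -(t * A 0 0) = A 0 0 * ε := by ring
      rw [this]
      exact mul_pos ha hε
    · rw [hkey i'.succ]
      have hsmv : S.mulVec q i' = (∑ j : Fin n, A i'.succ j.succ * q j) + A i'.succ 0 * t := by
        simp only [Matrix.mulVec, dotProduct, hSdef, Matrix.of_apply]
        have h1 : ∑ j : Fin n, (A i'.succ j.succ - A i'.succ 0 * A 0 j.succ / A 0 0) * q j
            = (∑ j : Fin n, A i'.succ j.succ * q j)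
              - A i'.succ 0 / A 0 0 * ∑ j : Fin n, A 0 j.succ * q j := by
          rw [Finset.mul_sum, ← Finset.sum_sub_distrib]
          apply Finset.sum_congr rfl
          intro j _
          ring
        rw [h1, hsum0]
        have h2 : A i'.succ 0 / A 0 0 * -(t * A 0 0) = -(A i'.succ 0 * t) := by
          field_simp
        rw [h2]
        ring
      have := hεi i'
      have hfin : A i'.succ 0 * (t + ε) + ∑ j : Fin n, A i'.succ j.succ * q j
          = S.mulVec q i' + ε * A i'.succ 0 := by
        rw [hsmv]; ring
      rw [hfin]
      exact this

theorem single_subchannel_game_solvable_iff_P {Q : ℕ}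
    (H : Fin Q → Fin Q → ℝ) (hH : ∀ q r, 0 < H q r)
    (Rstar : Fin Q → ℝ) (hR : ∀ q, 0 < Rstar q) :
    ((∃ σsq : Fin Q → ℝ, (∀ q, 0 < σsq q) ∧
        ∃ p : Fin Q → ℝ, (∀ q, 0 ≤ p q) ∧
          ∀ q, Real.log (1 + H q q * p q /
              (σsq q + ∑ r ∈ Finset.univ.erase q, H q r * p r)) = Rstar q) ↔
      IsPMatrix (Zmat H Rstar)) ∧
    (IsPMatrix (Zmat H Rstar) →
      ∀ σsq : Fin Q → ℝ, (∀ q, 0 < σsq q) →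
        ∀ p : Fin Q → ℝ,
          (((∀ q, 0 ≤ p q) ∧
            ∀ q, Real.log (1 + H q q * p q /
                (σsq q + ∑ r ∈ Finset.univ.erase q, H q r * p r)) = Rstar q) ↔
           p = (Zmat H Rstar)⁻¹.mulVec fun q => σsq q * (Real.exp (Rstar q) - 1))) := by
  have hE : ∀ q, 0 < Real.exp (Rstar q) - 1 := by
    intro q
    have : 1 < Real.exp (Rstar q) := Real.one_lt_exp_iff.2 (hR q)
    linarith
  have hZZ : ∀ q r, q ≠ r → Zmat H Rstar q r ≤ 0 := by
    intro q r hqr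
    simp only [Zmat, Matrix.of_apply, if_neg hqr]
    nlinarith [hE q, hH q r]
  have hmv : ∀ (p : Fin Q → ℝ) q, (Zmat H Rstar).mulVec p q
      = H q q * p q - (Real.exp (Rstar q) - 1) * ∑ r ∈ univ.erase q, H q r * p r := by
    intro p q
    have h1 : (Zmat H Rstar).mulVec p q = ∑ r, Zmat H Rstar q r * p r := rfl
    rw [h1, ← Finset.add_sum_erase _ _ (Finset.mem_univ q)]
    have h2 : Zmat H Rstar q q = H q q := by simp [Zmat]
    have h3 : ∑ r ∈ univ.erase q, Zmat H Rstar q r * p r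
        = -((Real.exp (Rstar q) - 1) * ∑ r ∈ univ.erase q, H q r * p r) := by
      rw [Finset.mul_sum, ← Finset.sum_neg_distrib]
      apply Finset.sum_congr rfl
      intro r hr
      have hne : q ≠ r := (Finset.ne_of_mem_erase hr).symm
      simp only [Zmat, Matrix.of_apply, if_neg hne]
      ring
    rw [h2, h3]
    ring
  have heqv : ∀ (σsq : Fin Q → ℝ), (∀ q, 0 < σsq q) → ∀ (p : Fin Q → ℝ), (∀ q, 0 ≤ p q) →
      ∀ q, (Real.log (1 + H q q * p q / (σsq q + ∑ r ∈ univ.erase q, H q r * p r)) = Rstar q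
        ↔ (Zmat H Rstar).mulVec p q = σsq q * (Real.exp (Rstar q) - 1)) := by
    intro σsq hσ p hp q
    set D : ℝ := σsq q + ∑ r ∈ univ.erase q, H q r * p r with hD
    have hDpos : 0 < D := by
      have h1 : 0 ≤ ∑ r ∈ univ.erase q, H q r * p r :=
        Finset.sum_nonneg fun r _ => mul_nonneg (hH q r).le (hp r)
      have := hσ q
      rw [hD]
      linarith
    have hfrac : 0 ≤ H q q * p q / D := div_nonneg (mul_nonneg (hH q q).le (hp q)) hDpos.le
    have hED : (Real.exp (Rstar q) - 1) * D
        = σsq q * (Real.exp (Rstar q) - 1)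
          + (Real.exp (Rstar q) - 1) * ∑ r ∈ univ.erase q, H q r * p r := by
      rw [hD]; ring
    constructor
    · intro hlog
      have hXpos : 0 < 1 + H q q * p q / D := by linarith
      have hexp : 1 + H q q * p q / D = Real.exp (Rstar q) := by
        rw [← hlog, Real.exp_log hXpos]
      have hdiv : H q q * p q / D = Real.exp (Rstar q) - 1 := by linarith
      rw [div_eq_iff hDpos.ne'] at hdiv
      rw [hmv p q, hdiv]
      linarith
    · intro hmve
      rw [hmv p q] at hmve
      have hHD : H q q * p q = (Real.exp (Rstar q) - 1) * D := by linarith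
      have hX : 1 + H q q * p q / D = Real.exp (Rstar q) := by
        rw [hHD, mul_div_assoc, div_self hDpos.ne', mul_one]
        ring
      rw [hX, Real.log_exp]
  constructor
  · constructor
    · rintro ⟨σsq, hσ, p, hp, heq⟩
      have hZp : ∀ q, (Zmat H Rstar).mulVec p q = σsq q * (Real.exp (Rstar q) - 1) :=
        fun q => (heqv σsq hσ p hp q).1 (heq q)
      have hppos : ∀ q, 0 < p q := by
        intro q
        have h := hZp q
        rw [hmv p q] at h
        have hsum : 0 ≤ ∑ r ∈ univ.erase q, H q r * p r :=
          Finset.sum_nonneg fun r _ => mul_nonneg (hH q r).le (hp r)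
        have ha1 : 0 < σsq q * (Real.exp (Rstar q) - 1) := mul_pos (hσ q) (hE q)
        have ha2 : 0 ≤ (Real.exp (Rstar q) - 1) * ∑ r ∈ univ.erase q, H q r * p r :=
          mul_nonneg (hE q).le hsum
        have h9 : 0 < H q q * p q := by linarith
        nlinarith [hH q q]
      exact isPMatrix_of_pos_vec _ hZZ p hppos
        (fun q => by rw [hZp q]; exact mul_pos (hσ q) (hE q))
    · intro hP
      obtain ⟨p, hppos, hZp⟩ := exists_pos_of_lead Q (Zmat H Rstar) hZZ
        (leadPos_of_isPMatrix _ hP)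
      refine ⟨fun q => (Zmat H Rstar).mulVec p q / (Real.exp (Rstar q) - 1),
        fun q => div_pos (hZp q) (hE q), p, fun q => (hppos q).le, fun q => ?_⟩
      apply (heqv _ (fun q => div_pos (hZp q) (hE q)) p (fun q => (hppos q).le) q).2
      rw [div_mul_cancel₀ _ (hE q).ne']
  · intro hP σsq hσ p
    obtain ⟨p₀, hp₀pos, hZp₀⟩ := exists_pos_of_lead Q (Zmat H Rstar) hZZ
      (leadPos_of_isPMatrix _ hP)
    have hdet : 0 < (Zmat H Rstar).det := by
      have h2 : (Zmat H Rstar).det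
          = ((Zmat H Rstar).submatrix
              (fun i : {x // x ∈ (univ : Finset (Fin Q))} => (i : Fin Q))
              (fun i : {x // x ∈ (univ : Finset (Fin Q))} => (i : Fin Q))).det :=
        (Matrix.det_submatrix_equiv_self
          (Equiv.subtypeUnivEquiv fun x => Finset.mem_univ x) _).symm
      rw [h2]
      exact hP Finset.univ
    have hunit : IsUnit (Zmat H Rstar).det := isUnit_iff_ne_zero.2 hdet.ne'
    set b : Fin Q → ℝ := fun q => σsq q * (Real.exp (Rstar q) - 1) with hb
    constructor
    · rintro ⟨hp, heq⟩
      have hZp : (Zmat H Rstar).mulVec p = b :=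
        funext fun q => (heqv σsq hσ p hp q).1 (heq q)
      have h3 : (Zmat H Rstar)⁻¹.mulVec ((Zmat H Rstar).mulVec p) = p := by
        rw [Matrix.mulVec_mulVec, Matrix.nonsing_inv_mul _ hunit, Matrix.one_mulVec]
      rw [← h3, hZp]
    · intro hdef
      have hZp : (Zmat H Rstar).mulVec p = b := by
        rw [hdef, Matrix.mulVec_mulVec, Matrix.mul_nonsing_inv _ hunit, Matrix.one_mulVec]
      have hp : ∀ q, 0 ≤ p q := by
        apply nonneg_of_mulVec_nonneg _ hZZ p₀ hp₀pos hZp₀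
        intro q
        rw [hZp]
        exact (mul_pos (hσ q) (hE q)).le
      exact ⟨hp, fun q => (heqv σsq hσ p hp q).2 (by rw [hZp])⟩
end

section
/- Let Z^max(R*) be the Q×Q matrix with unit diagonal and off-diagonal entries −(e^{R*_q}−1)β^max_{qr} where β^max_{qr} = max_k |H_{qr}(k)|²/|H_{rr}(k)|², and let D(k) = Diag(|H_{qq}(k)|²). If Z^max(R*) is a P-matrix, then Z_k(R*) ≥ Z^max(R*)D(k) entrywise, and consequently every Z_k(R*) is a P-matrix. -/
open Finset

section Aux
open Matrix

lemma det_add_single_diag_fin {n : ℕ} (M : Matrix (Fin (n+1)) (Fin (n+1)) ℝ) (c : ℝ) :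
    (M + Matrix.diagonal (Pi.single 0 c)).det
      = M.det + c * (M.submatrix Fin.succ Fin.succ).det := by
  have h1 : M + Matrix.diagonal (Pi.single 0 c)
      = M.updateCol 0 ((fun j => M j 0) + c • (Pi.single 0 1 : Fin (n+1) → ℝ)) := by
    ext a b
    by_cases hb : b = 0
    · subst hb
      by_cases ha : a = 0 <;>
        simp [Matrix.updateCol_apply, Matrix.diagonal_apply, Pi.single_apply, ha]
    · simp [Matrix.updateCol_apply, Matrix.diagonal_apply, Pi.single_apply, hb]
      intro hab
      subst hab
      simp [hb]
  rw [h1, Matrix.det_updateCol_add, Matrix.det_updateCol_smul]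
  congr 1
  · exact congrArg _ (Matrix.updateCol_eq_self M 0)
  have h2 : (M.updateCol 0 ((Pi.single 0 1 : Fin (n+1) → ℝ))).det
      = (M.submatrix Fin.succ Fin.succ).det := by
    rw [Matrix.det_succ_column_zero]
    rw [Finset.sum_eq_single 0]
    · simp only [Matrix.updateCol_apply, Fin.succAbove_zero, Pi.single_eq_same, one_mul,
        if_pos rfl, pow_zero, Fin.val_zero]
      rw [if_pos trivial, one_mul]
      have : (M.updateCol 0 (Pi.single 0 1)).submatrix Fin.succ Fin.succ
          = M.submatrix Fin.succ Fin.succ := by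
        ext a b
        simp [Matrix.updateCol_apply, Fin.succ_ne_zero]
      rw [this]
    · intro i _ hi
      simp [Matrix.updateCol_apply, Pi.single_apply, hi]
    · simp
  rw [h2]

lemma det_add_single_diag {m : Type*} [Fintype m] [DecidableEq m]
    (M : Matrix m m ℝ) (i : m) (c : ℝ) :
    (M + Matrix.diagonal (Pi.single i c)).det
      = M.det + c * (M.submatrix (fun j : {x : m // x ≠ i} => (j : m))
          (fun j : {x : m // x ≠ i} => (j : m))).det := by
  have hcard : Fintype.card m = Fintype.card m - 1 + 1 :=
    (Nat.succ_pred_eq_of_pos (Fintype.card_pos_iff.2 ⟨i⟩)).symm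
  set n := Fintype.card m - 1 with hn
  let e0 : m ≃ Fin (n+1) := (Fintype.equivFinOfCardEq hcard)
  let e : m ≃ Fin (n+1) := e0.trans (Equiv.swap (e0 i) 0)
  have hei : e i = 0 := by simp [e, Equiv.swap_apply_left]
  -- transport
  rw [← Matrix.det_submatrix_equiv_self e.symm (M + Matrix.diagonal (Pi.single i c)),
      ← Matrix.det_submatrix_equiv_self e.symm M]
  have hsub : (M + Matrix.diagonal (Pi.single i c)).submatrix e.symm e.symm
      = M.submatrix e.symm e.symm + Matrix.diagonal (Pi.single 0 c) := by
    ext a b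
    simp only [Matrix.submatrix_apply, Matrix.add_apply, Matrix.diagonal_apply,
      Pi.single_apply]
    congr 1
    by_cases hab : a = b
    · subst hab
      by_cases ha : a = 0
      · subst ha
        simp [← hei]
      · have hne' : e.symm a ≠ i := by
          intro h'
          exact ha (by rw [← hei, ← h', Equiv.apply_symm_apply])
        simp [hne', ha]
    · have : e.symm a ≠ e.symm b := fun h => hab (e.symm.injective h)
      simp [if_neg hab, if_neg this]
  rw [hsub, det_add_single_diag_fin]
  congr 1
  congr 1
  -- minors equal via equivalence
  have heq : ∀ (a : Fin n), e.symm a.succ ≠ i := by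
    intro a h
    have : a.succ = e i := by rw [← h]; simp
    rw [hei] at this
    exact (Fin.succ_ne_zero a) this
  let f : Fin n ≃ {x : m // x ≠ i} :=
    { toFun := fun a => ⟨e.symm a.succ, heq a⟩
      invFun := fun x => (e x).pred (by
        intro h0
        exact x.2 (by
          have := congrArg e.symm h0
          rw [Equiv.symm_apply_apply, ← hei, Equiv.symm_apply_apply] at this
          exact this))
      left_inv := by intro a; simp [Fin.pred_succ]
      right_inv := by
        intro x
        ext
        simp }
  rw [← Matrix.det_submatrix_equiv_self f
      (M.submatrix (fun j : {x : m // x ≠ i} => (j : m)) (fun j : {x : m // x ≠ i} => (j : m)))]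
  congr 1

lemma det_pos_of_snr {m : Type*} [Fintype m] [DecidableEq m] (M : Matrix m m ℝ)
    (h : ∀ x : m → ℝ, x ≠ 0 → ∃ i, 0 < x i * M.mulVec x i) : 0 < M.det := by
  set f : ℝ → ℝ := fun t => ((1-t) • M + t • (1 : Matrix m m ℝ)).det with hf
  have hcont : Continuous f := by
    apply Continuous.matrix_det
    fun_prop
  have hf1 : f 1 = 1 := by simp [hf]
  have hne : ∀ t : ℝ, 0 ≤ t → t < 1 → f t ≠ 0 := by
    intro t ht0 ht1 hzero
    obtain ⟨x, hx, hmx⟩ := (Matrix.exists_mulVec_eq_zero_iff).2 hzero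
    obtain ⟨i, hi⟩ := h x hx
    have hmv : ((1-t) • M + t • (1 : Matrix m m ℝ)).mulVec x i
        = (1-t) * M.mulVec x i + t * x i := by
      simp [Matrix.add_mulVec, Matrix.smul_mulVec, Matrix.one_mulVec]
    have h0 : (0:ℝ) = x i * ((1-t) * M.mulVec x i + t * x i) := by
      rw [← hmv, hmx]; simp
    nlinarith [sq_nonneg (x i)]
  by_contra hM
  have hf0 : f 0 < 0 := by
    have : f 0 = M.det := by simp [hf]
    rcases lt_or_eq_of_le (not_lt.1 hM) with h' | h'
    · rw [this]; exact h'
    · exact absurd (this.trans h') (hne 0 le_rfl one_pos)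
  obtain ⟨t, ht, hft⟩ := intermediate_value_Icc (zero_le_one) hcont.continuousOn
    (show (0:ℝ) ∈ Set.Icc (f 0) (f 1) by constructor <;> [exact hf0.le; simp [hf1]])
  have ht1 : t < 1 := by
    rcases lt_or_eq_of_le ht.2 with h' | h'
    · exact h'
    · exfalso; rw [h', hf1] at hft; exact one_ne_zero hft
  exact hne t ht.1 ht1 hft

noncomputable def pminor {Q : ℕ} (A : Matrix (Fin Q) (Fin Q) ℝ) (S : Finset (Fin Q)) : ℝ :=
  (A.submatrix (fun i : {x // x ∈ S} => (i : Fin Q))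
      (fun i : {x // x ∈ S} => (i : Fin Q))).det

lemma pminor_bump {Q : ℕ} (A : Matrix (Fin Q) (Fin Q) ℝ) {S : Finset (Fin Q)}
    {i : Fin Q} (hi : i ∈ S) (c : ℝ) :
    pminor (A + Matrix.diagonal (Pi.single i c)) S
      = pminor A S + c * pminor A (S.erase i) := by
  classical
  set i' : {x // x ∈ S} := ⟨i, hi⟩ with hi'
  have hsub : (A + Matrix.diagonal (Pi.single i c)).submatrix
        (fun j : {x // x ∈ S} => (j : Fin Q)) (fun j : {x // x ∈ S} => (j : Fin Q))
      = A.submatrix (fun j : {x // x ∈ S} => (j : Fin Q)) (fun j : {x // x ∈ S} => (j : Fin Q))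
        + Matrix.diagonal (Pi.single i' c) := by
    ext a b
    simp only [Matrix.submatrix_apply, Matrix.add_apply, Matrix.diagonal_apply,
      Pi.single_apply]
    congr 1
    by_cases hab : a = b
    · subst hab
      have : ((a : Fin Q) = i) ↔ (a = i') := by
        constructor
        · intro h; exact Subtype.ext h
        · intro h; rw [h]
      simp [this]
    · have : (a : Fin Q) ≠ (b : Fin Q) := fun h => hab (Subtype.ext h)
      simp [if_neg hab, if_neg this]
  unfold pminor
  rw [hsub, det_add_single_diag]
  congr 2
  -- minors: {j : {x // x ∈ S} // j ≠ i'}  vs  {x // x ∈ S.erase i}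
  let f : {x // x ∈ S.erase i} ≃ {j : {x // x ∈ S} // j ≠ i'} :=
    { toFun := fun x => ⟨⟨x, Finset.mem_of_mem_erase x.2⟩,
        fun h => (Finset.ne_of_mem_erase x.2) (congrArg Subtype.val h)⟩
      invFun := fun j => ⟨(j : {x // x ∈ S}),
        Finset.mem_erase.2 ⟨fun h => j.2 (Subtype.ext h), (j.1).2⟩⟩
      left_inv := fun x => rfl
      right_inv := fun j => rfl }
  rw [← Matrix.det_submatrix_equiv_self f]
  congr 1

lemma pminor_pos_add_diag {Q : ℕ} (A : Matrix (Fin Q) (Fin Q) ℝ) (hA : IsPMatrix A)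
    (d : Fin Q → ℝ) (hd : ∀ i, 0 ≤ d i) (S : Finset (Fin Q)) :
    0 < pminor (A + Matrix.diagonal d) S := by
  classical
  suffices h : ∀ (n : ℕ) (d : Fin Q → ℝ), (∀ i, 0 ≤ d i) → ∀ S : Finset (Fin Q),
      (S.filter fun j => d j ≠ 0).card = n → 0 < pminor (A + Matrix.diagonal d) S by
    exact h _ d hd S rfl
  intro n
  induction n with
  | zero =>
    intro d hd S hcard
    have hzero : ∀ j ∈ S, d j = 0 := by
      intro j hj
      by_contra hdj
      have : j ∈ S.filter fun j => d j ≠ 0 := Finset.mem_filter.2 ⟨hj, hdj⟩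
      rw [Finset.card_eq_zero.1 hcard] at this
      exact absurd this (Finset.notMem_empty j)
    have : pminor (A + Matrix.diagonal d) S = pminor A S := by
      unfold pminor
      congr 1
      ext a b
      simp only [Matrix.submatrix_apply, Matrix.add_apply, Matrix.diagonal_apply]
      by_cases hab : (a : Fin Q) = (b : Fin Q)
      · simp [hab, hzero _ b.2]
      · simp [hab]
    rw [this]; exact hA S
  | succ n ih =>
    intro d hd S hcard
    have hne : (S.filter fun j => d j ≠ 0).Nonempty := by
      rw [← Finset.card_pos, hcard]; exact Nat.succ_pos n
    obtain ⟨i, hi⟩ := hne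
    obtain ⟨hiS, hdi⟩ := Finset.mem_filter.1 hi
    set d' : Fin Q → ℝ := Function.update d i 0 with hd'
    have hdec : A + Matrix.diagonal d
        = (A + Matrix.diagonal d') + Matrix.diagonal (Pi.single i (d i)) := by
      have hdfun : d = fun j => d' j + (Pi.single i (d i) : Fin Q → ℝ) j := by
        funext j
        by_cases hj : j = i
        · subst hj; simp [hd']
        · simp [hd', Function.update_of_ne hj, Pi.single_apply, hj]
      rw [add_assoc, Matrix.diagonal_add]
      congr 1
      exact congrArg Matrix.diagonal hdfun
    have hfilter : ∀ T : Finset (Fin Q), (T.filter fun j => d' j ≠ 0)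
        = (T.filter fun j => d j ≠ 0).erase i := by
      intro T
      ext j
      simp only [Finset.mem_filter, Finset.mem_erase]
      constructor
      · intro ⟨hjT, hj⟩
        have hji : j ≠ i := by
          intro h; subst h; exact hj (by simp [hd'])
        exact ⟨hji, hjT, by rwa [hd', Function.update_of_ne hji] at hj⟩
      · intro ⟨hji, hjT, hj⟩
        exact ⟨hjT, by rwa [hd', Function.update_of_ne hji]⟩
    have hd'0 : ∀ j, 0 ≤ d' j := by
      intro j
      by_cases hj : j = i
      · subst hj; simp [hd']
      · rw [hd', Function.update_of_ne hj]; exact hd j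
    have hcard1 : (S.filter fun j => d' j ≠ 0).card = n := by
      rw [hfilter]
      rw [Finset.card_erase_of_mem hi, hcard]
      rfl
    have hcard2 : ((S.erase i).filter fun j => d' j ≠ 0).card = n := by
      rw [hfilter]
      have heq : ((S.erase i).filter fun j => d j ≠ 0) = (S.filter fun j => d j ≠ 0).erase i := by
        ext j
        simp only [Finset.mem_filter, Finset.mem_erase]
        tauto
      rw [heq, Finset.erase_idem, Finset.card_erase_of_mem hi, hcard]
      rfl
    rw [hdec, pminor_bump _ hiS]
    have h1 := ih d' hd'0 S hcard1
    have h2 := ih d' hd'0 (S.erase i) hcard2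
    have : 0 ≤ d i * pminor (A + Matrix.diagonal d') (S.erase i) :=
      mul_nonneg (hd i) h2.le
    linarith

lemma snr_of_P {Q : ℕ} (A : Matrix (Fin Q) (Fin Q) ℝ) (hA : IsPMatrix A)
    (x : Fin Q → ℝ) (hx : x ≠ 0) : ∃ i, 0 < x i * A.mulVec x i := by
  classical
  by_contra hcon
  push_neg at hcon
  set S : Finset (Fin Q) := Finset.univ.filter (fun j => x j ≠ 0) with hS
  set d : Fin Q → ℝ := fun j => if x j = 0 then 0 else -(x j * A.mulVec x j) / (x j)^2 with hd
  have hd0 : ∀ j, 0 ≤ d j := by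
    intro j
    by_cases hj : x j = 0
    · simp [hd, hj]
    · simp only [hd, if_neg hj]
      exact div_nonneg (neg_nonneg.2 (hcon j)) (sq_nonneg _)
  set M := (A + Matrix.diagonal d).submatrix
      (fun i : {y // y ∈ S} => (i : Fin Q)) (fun i : {y // y ∈ S} => (i : Fin Q)) with hM
  have hdet : 0 < M.det := pminor_pos_add_diag A hA d hd0 S
  set v : {y // y ∈ S} → ℝ := fun j => x j with hv
  have hvne : v ≠ 0 := by
    obtain ⟨j, hj⟩ := Function.ne_iff.1 hx
    have hxj : x j ≠ 0 := by simpa using hj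
    intro h0
    have hjS : j ∈ S := by simp [hS, hxj]
    have := congrFun h0 ⟨j, hjS⟩
    exact hxj this
  have hker : M.mulVec v = 0 := by
    funext i
    have h2 : (i : Fin Q) ∈ Finset.univ.filter (fun j => x j ≠ 0) := hS ▸ i.2
    have hxi : x (i : Fin Q) ≠ 0 := (Finset.mem_filter.1 h2).2
    have hsum : ∑ j : {y // y ∈ S}, A (i : Fin Q) (j : Fin Q) * x (j : Fin Q)
        = A.mulVec x (i : Fin Q) := by
      rw [Finset.sum_coe_sort S (fun j => A (i : Fin Q) j * x j)]
      rw [Matrix.mulVec, dotProduct]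
      apply Finset.sum_subset (Finset.subset_univ S)
      intro j _ hjS
      have : x j = 0 := by
        by_contra h
        exact hjS (by simp [hS, h])
      simp [this]
    have hdx : d (i : Fin Q) * x (i : Fin Q) = -(A.mulVec x (i : Fin Q)) := by
      simp only [hd, if_neg hxi]
      field_simp
    simp only [Matrix.mulVec, dotProduct, hM, Matrix.submatrix_apply, Matrix.add_apply]
    simp only [Pi.zero_apply]
    rw [show ∑ j : {y // y ∈ S}, (A (i:Fin Q) (j:Fin Q) + Matrix.diagonal d (i:Fin Q) (j:Fin Q)) * v j
        = (∑ j : {y // y ∈ S}, A (i:Fin Q) (j:Fin Q) * x (j:Fin Q))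
          + ∑ j : {y // y ∈ S}, Matrix.diagonal d (i:Fin Q) (j:Fin Q) * x (j:Fin Q) by
      rw [← Finset.sum_add_distrib]; apply Finset.sum_congr rfl; intro j _; ring]
    have hdiagsum : ∑ j : {y // y ∈ S}, Matrix.diagonal d (i:Fin Q) (j:Fin Q) * x (j:Fin Q)
        = d (i : Fin Q) * x (i : Fin Q) := by
      rw [Finset.sum_eq_single i]
      · simp [Matrix.diagonal_apply]
      · intro j _ hji
        have : (i : Fin Q) ≠ (j : Fin Q) := fun h => hji (Subtype.ext h).symm
        simp [Matrix.diagonal_apply, this.symm, this]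
      · simp
    rw [hsum, hdiagsum, hdx]
    ring
  have : M.det = 0 := (Matrix.exists_mulVec_eq_zero_iff).1 ⟨v, hvne, hker⟩
  rw [this] at hdet
  exact lt_irrefl 0 hdet

lemma P_of_snr {Q : ℕ} (A : Matrix (Fin Q) (Fin Q) ℝ)
    (h : ∀ x : Fin Q → ℝ, x ≠ 0 → ∃ i, 0 < x i * A.mulVec x i) : IsPMatrix A := by
  classical
  intro S
  apply det_pos_of_snr
  intro x hx
  set x' : Fin Q → ℝ := fun i => if hi : i ∈ S then x ⟨i, hi⟩ else 0 with hx'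
  have hx'ne : x' ≠ 0 := by
    obtain ⟨j, hj⟩ := Function.ne_iff.1 hx
    intro h0
    have := congrFun h0 (j : Fin Q)
    rw [hx'] at this
    simp only [j.2, dif_pos] at this
    exact hj (by simpa using this)
  obtain ⟨i, hi⟩ := h x' hx'ne
  have hx'i : x' i ≠ 0 := by
    intro h0
    rw [h0] at hi
    simp at hi
  have hiS : i ∈ S := by
    by_contra hiS
    exact hx'i (by simp [hx', hiS])
  refine ⟨⟨i, hiS⟩, ?_⟩
  have hxv : x ⟨i, hiS⟩ = x' i := by simp [hx', hiS]
  have hmv : (A.submatrix (fun i : {y // y ∈ S} => (i : Fin Q))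
      (fun i : {y // y ∈ S} => (i : Fin Q))).mulVec x ⟨i, hiS⟩ = A.mulVec x' i := by
    simp only [Matrix.mulVec, dotProduct, Matrix.submatrix_apply]
    rw [show (∑ j : {y // y ∈ S}, A i (j : Fin Q) * x j)
        = ∑ j ∈ S, A i j * x' j from ?_]
    · apply Finset.sum_subset (Finset.subset_univ S)
      intro j _ hjS
      simp [hx', hjS]
    · rw [← Finset.sum_coe_sort S (fun j => A i j * x' j)]
      apply Finset.sum_congr rfl
      intro j _
      simp [hx', j.2]
  rw [hxv, hmv]
  exact hi

theorem Zmax_P_implies_Zk_P {Q N : ℕ} [NeZero N]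
    (H : Fin Q → Fin Q → Fin N → ℝ) (hH : ∀ q r k, 0 < H q r k)
    (Rstar : Fin Q → ℝ) (hR : ∀ q, 0 < Rstar q)
    (βmax : Fin Q → Fin Q → ℝ)
    (hβ : ∀ q r, βmax q r = Finset.univ.sup' Finset.univ_nonempty
        (fun k : Fin N => H q r k / H r r k))
    (Zmax : Matrix (Fin Q) (Fin Q) ℝ)
    (hZmax : ∀ q r, Zmax q r =
        if q = r then 1 else -(Real.exp (Rstar q) - 1) * βmax q r)
    (Zk : Fin N → Matrix (Fin Q) (Fin Q) ℝ)
    (hZk : ∀ k q r, Zk k q r =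
        if q = r then H q q k else -(Real.exp (Rstar q) - 1) * H q r k)
    (D : Fin N → Matrix (Fin Q) (Fin Q) ℝ)
    (hD : ∀ k, D k = Matrix.diagonal fun q => H q q k)
    (hP : IsPMatrix Zmax) :
    (∀ k q r, (Zmax * D k) q r ≤ Zk k q r) ∧ ∀ k, IsPMatrix (Zk k) := by
  classical
  have hE : ∀ q, 0 < Real.exp (Rstar q) - 1 := by
    intro q
    have : (1:ℝ) < Real.exp (Rstar q) := by
      rw [show (1:ℝ) = Real.exp 0 by simp]
      exact Real.exp_lt_exp.2 (hR q)
    linarith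
  have hBD : ∀ k q r, (Zmax * D k) q r = Zmax q r * H r r k := by
    intro k q r
    rw [hD k, Matrix.mul_diagonal]
  -- Part 1
  have part1 : ∀ k q r, (Zmax * D k) q r ≤ Zk k q r := by
    intro k q r
    rw [hBD, hZmax, hZk]
    by_cases hqr : q = r
    · subst hqr; simp
    · rw [if_neg hqr, if_neg hqr]
      have hβge : H q r k / H r r k ≤ βmax q r := by
        rw [hβ]
        exact Finset.le_sup' (fun k : Fin N => H q r k / H r r k) (Finset.mem_univ k)
      have h1 : H q r k ≤ βmax q r * H r r k := by
        rw [div_le_iff₀ (hH r r k)] at hβge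
        linarith
      have h2 : (Real.exp (Rstar q) - 1) * H q r k
          ≤ (Real.exp (Rstar q) - 1) * (βmax q r * H r r k) :=
        mul_le_mul_of_nonneg_left h1 (hE q).le
      nlinarith [hE q]
  -- Zmax * D k is a P-matrix
  have hBP : ∀ k, IsPMatrix (Zmax * D k) := by
    intro k S
    have hsub : (Zmax * D k).submatrix (fun i : {x // x ∈ S} => (i : Fin Q))
          (fun i : {x // x ∈ S} => (i : Fin Q))
        = (Zmax.submatrix (fun i : {x // x ∈ S} => (i : Fin Q))
            (fun i : {x // x ∈ S} => (i : Fin Q)))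
          * Matrix.diagonal (fun j : {x // x ∈ S} => H (j : Fin Q) (j : Fin Q) k) := by
      ext a b
      rw [Matrix.mul_diagonal]
      simp only [Matrix.submatrix_apply]
      rw [hBD]
    rw [hsub, Matrix.det_mul, Matrix.det_diagonal]
    exact mul_pos (hP S) (Finset.prod_pos fun j _ => hH _ _ k)
  -- off-diagonal of Zk nonpositive
  refine ⟨part1, fun k => ?_⟩
  apply P_of_snr
  intro x hx
  set y : Fin Q → ℝ := fun i => |x i| with hy
  have hyne : y ≠ 0 := by
    obtain ⟨j, hj⟩ := Function.ne_iff.1 hx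
    have hxj : x j ≠ 0 := by simpa using hj
    intro h0
    have := congrFun h0 j
    simp only [hy, Pi.zero_apply] at this
    exact hxj (abs_eq_zero.1 this)
  obtain ⟨i, hi⟩ := snr_of_P _ (hBP k) y hyne
  refine ⟨i, lt_of_lt_of_le hi ?_⟩
  -- termwise comparison
  have hterm : ∀ j, (Zmax * D k) i j * (y i * y j) ≤ Zk k i j * (x i * x j) := by
    intro j
    by_cases hij : i = j
    · subst hij
      have h1 : (Zmax * D k) i i ≤ Zk k i i := part1 k i i
      have h2 : y i * y i = x i * x i := by
        simp [hy, ← abs_mul, abs_mul_self]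
      rw [h2]
      exact mul_le_mul_of_nonneg_right h1 (mul_self_nonneg (x i))
    · have hA0 : Zk k i j ≤ 0 := by
        rw [hZk, if_neg hij]
        have := mul_pos (hE i) (hH i j k)
        nlinarith
      have hBA : (Zmax * D k) i j ≤ Zk k i j := part1 k i j
      have hyy : 0 ≤ y i * y j := mul_nonneg (abs_nonneg _) (abs_nonneg _)
      have hxy : x i * x j ≤ y i * y j := by
        rw [hy]
        calc x i * x j ≤ |x i * x j| := le_abs_self _
        _ = |x i| * |x j| := abs_mul _ _
      calc (Zmax * D k) i j * (y i * y j) ≤ Zk k i j * (y i * y j) :=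
            mul_le_mul_of_nonneg_right hBA hyy
        _ ≤ Zk k i j * (x i * x j) := mul_le_mul_of_nonpos_left hxy hA0
  calc y i * (Zmax * D k).mulVec y i
      = ∑ j, (Zmax * D k) i j * (y i * y j) := by
        rw [Matrix.mulVec, dotProduct, Finset.mul_sum]
        apply Finset.sum_congr rfl
        intro j _
        ring
    _ ≤ ∑ j, Zk k i j * (x i * x j) := Finset.sum_le_sum fun j _ => hterm j
    _ = x i * (Zk k).mulVec x i := by
        rw [Matrix.mulVec, dotProduct, Finset.mul_sum]
        apply Finset.sum_congr rfl
        intro j _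
        ring

end Aux
end
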